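/- arXiv:2108.01247 — 4 statements merged into one kernel-verified Lean document; each statement's English description precedes it below -/
import Mathlib

section
/- ∫₀¹ ((arcsin x)²)/x dx = (π²/4)·log 2 − (7/8)·ζ(3), where the integral is taken over the real interval [0,1]. -/
open Real Set intervalIntegral MeasureTheory Filter Topology

lemma cos_nat_pi (k : ℕ) : Real.cos ((k:ℝ) * π) = (-1:ℝ)^k := by
  simpa using Real.cos_add_nat_mul_pi 0 k

lemma cosInt (k : ℕ) (hk : k ≠ 0) :
    ∫ θ in (0:ℝ)..(π/2), θ * Real.cos (2*(k:ℝ)*θ)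
      = ((-1:ℝ)^k - 1) / (4*(k:ℝ)^2) := by
  have hk' : (0:ℝ) < (k:ℝ) := by positivity
  have hkne : (k:ℝ) ≠ 0 := hk'.ne'
  have H : ∀ θ : ℝ, HasDerivAt
      (fun t : ℝ => t * Real.sin (2*(k:ℝ)*t) / (2*k) + Real.cos (2*(k:ℝ)*t) / (4*k^2))
      (θ * Real.cos (2*(k:ℝ)*θ)) θ := by
    intro θ
    have hid : HasDerivAt (fun t:ℝ => 2*(k:ℝ)*t) (2*(k:ℝ)) θ := by
      simpa using (hasDerivAt_id θ).const_mul (2*(k:ℝ))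
    have hs : HasDerivAt (fun t : ℝ => Real.sin (2*(k:ℝ)*t)) (Real.cos (2*(k:ℝ)*θ) * (2*k)) θ :=
      (Real.hasDerivAt_sin (2*(k:ℝ)*θ)).comp θ hid
    have hc : HasDerivAt (fun t : ℝ => Real.cos (2*(k:ℝ)*t)) (-Real.sin (2*(k:ℝ)*θ) * (2*k)) θ :=
      (Real.hasDerivAt_cos (2*(k:ℝ)*θ)).comp θ hid
    have h1 : HasDerivAt (fun t : ℝ => t * Real.sin (2*(k:ℝ)*t))
        (1 * Real.sin (2*(k:ℝ)*θ) + θ * (Real.cos (2*(k:ℝ)*θ) * (2*k))) θ :=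
      (hasDerivAt_id θ).mul hs
    have := ((h1.div_const (2*(k:ℝ))).add (hc.div_const (4*(k:ℝ)^2)))
    refine this.congr_deriv ?_
    field_simp
    ring
  rw [intervalIntegral.integral_eq_sub_of_hasDerivAt (fun θ _ => H θ)
    ((continuous_id.mul (Real.continuous_cos.comp (continuous_const.mul continuous_id))).intervalIntegrable _ _)]
  have h2 : 2*(k:ℝ)*(π/2) = k * π := by ring
  rw [h2, Real.sin_nat_mul_pi, cos_nat_pi]
  simp
  ring

lemma abs_one_sub_exp (r θ : ℝ) :
    ‖1 - r * Complex.exp (2*θ*Complex.I)‖ ^ 2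
      = (1 - r)^2 + 4*r*(Real.sin θ)^2 := by
  rw [← Complex.normSq_eq_norm_sq]
  have : (2*(θ:ℂ)*Complex.I) = ((2*θ:ℝ):ℂ) * Complex.I := by push_cast; ring
  rw [this, Complex.exp_mul_I, ← Complex.ofReal_cos, ← Complex.ofReal_sin,
    Complex.normSq_apply]
  simp only [Complex.sub_re, Complex.sub_im, Complex.one_re, Complex.one_im, Complex.mul_re,
    Complex.mul_im, Complex.ofReal_re, Complex.ofReal_im, Complex.add_re, Complex.add_im,
    Complex.I_re, Complex.I_im, mul_zero, mul_one, zero_mul, sub_zero, zero_sub, zero_add, add_zero]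
  have hc : Real.cos (2*θ) = 1 - 2 * Real.sin θ ^ 2 := by
    rw [Real.cos_two_mul']
    nlinarith [Real.sin_sq_add_cos_sq θ]
  linear_combination r^2 * Real.sin_sq_add_cos_sq (2*θ) + (-2*r) * hc

lemma abs_one_sub_exp_one (θ : ℝ) (h0 : 0 ≤ θ) (h1 : θ ≤ π) :
    ‖1 - Complex.exp (2*θ*Complex.I)‖ = 2 * Real.sin θ := by
  have hs : 0 ≤ Real.sin θ := Real.sin_nonneg_of_nonneg_of_le_pi h0 h1
  have h := abs_one_sub_exp 1 θ
  simp only [Complex.ofReal_one, one_mul] at h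
  have h2 : ‖1 - Complex.exp (2*θ*Complex.I)‖ ^ 2 = (2*Real.sin θ)^2 := by
    rw [h]; ring
  nlinarith [norm_nonneg (1 - Complex.exp (2*θ*Complex.I))]

lemma hasSum_log_abs {r : ℝ} (θ : ℝ) (h0 : 0 ≤ r) (h1 : r < 1) :
    HasSum (fun k : ℕ => r^k * Real.cos (2*(k:ℝ)*θ) / k)
      (-Real.log (‖1 - r * Complex.exp (2*θ*Complex.I)‖)) := by
  have h2 : (2*(θ:ℂ)*Complex.I) = ((2*θ:ℝ):ℂ) * Complex.I := by push_cast; ring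
  set z : ℂ := r * Complex.exp (2*θ*Complex.I) with hzdef
  have hz : ‖z‖ < 1 := by
    rw [hzdef, h2, norm_mul, Complex.norm_exp_ofReal_mul_I, mul_one, Complex.norm_real,
      Real.norm_of_nonneg h0]
    exact h1
  have H := Complex.hasSum_re (Complex.hasSum_taylorSeries_neg_log hz)
  have hre : ∀ k : ℕ, (z^k / k).re = r^k * Real.cos (2*(k:ℝ)*θ) / k := by
    intro k
    have hzk : z^k = ((r^k : ℝ) : ℂ) * Complex.exp (((2*(k:ℝ)*θ : ℝ):ℂ) * Complex.I) := by
      rw [hzdef, mul_pow, ← Complex.exp_nat_mul]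
      push_cast
      ring_nf
    rw [hzk]
    rw [show ((k:ℂ)) = ((k:ℝ):ℂ) by push_cast; rfl, Complex.div_ofReal_re,
      Complex.re_ofReal_mul, Complex.exp_ofReal_mul_I_re]
  have hlogre : (-Complex.log (1 - z)).re
      = -Real.log (‖1 - z‖) := by
    rw [Complex.neg_re, Complex.log_re]
  rw [← hlogre]
  exact H.congr_fun (fun k => (hre k).symm)

lemma contOn_zero {f : ℝ → ℝ} {b : ℝ} (h0 : f 0 = 0)
    (hc : ∀ x ∈ Ioc 0 b, ContinuousAt f x)
    (ht : Tendsto f (𝓝[>] (0:ℝ)) (𝓝 0)) : ContinuousOn f (Icc 0 b) := by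
  intro x hx
  rcases eq_or_lt_of_le hx.1 with rfl | hxpos
  · have : ContinuousWithinAt f (Ioi 0) 0 := by
      rw [ContinuousWithinAt, h0]; exact ht
    rw [continuousWithinAt_Ioi_iff_Ici] at this
    exact this.mono (fun y hy => hy.1)
  · exact (hc x ⟨hxpos, hx.2⟩).continuousWithinAt

lemma tendsto_sin_div : Tendsto (fun θ : ℝ => Real.sin θ / θ) (𝓝[≠] (0:ℝ)) (𝓝 1) := by
  have h := (Real.hasDerivAt_sin 0)
  rw [hasDerivAt_iff_tendsto_slope] at h
  simp only [Real.cos_zero] at h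
  refine h.congr (fun x => ?_)
  simp [slope_def_field, div_eq_mul_inv, mul_comm]

lemma tendsto_div_sin : Tendsto (fun θ : ℝ => θ / Real.sin θ) (𝓝[>] (0:ℝ)) (𝓝 1) := by
  have h : Tendsto (fun θ : ℝ => (Real.sin θ / θ)⁻¹) (𝓝[≠] (0:ℝ)) (𝓝 1) := by
    simpa using tendsto_sin_div.inv₀ one_ne_zero
  refine Tendsto.congr (fun x => by rw [inv_div]) (h.mono_left ?_)
  exact nhdsWithin_mono 0 (fun x hx => ne_of_gt hx)

lemma contOn_mul_log_sin : ContinuousOn (fun θ : ℝ => θ * Real.log (Real.sin θ)) (Icc 0 (π/2)) := by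
  apply contOn_zero (by simp)
  · intro x hx
    have hs : Real.sin x ≠ 0 :=
      (Real.sin_pos_of_pos_of_lt_pi hx.1 (lt_of_le_of_lt hx.2 (by linarith [pi_pos]))).ne'
    exact continuousAt_id.mul ((Real.continuousAt_log hs).comp Real.continuous_sin.continuousAt)
  · have h1 : Tendsto (fun θ : ℝ => θ * Real.log θ) (𝓝[>] (0:ℝ)) (𝓝 0) := by
      have := tendsto_log_mul_rpow_nhdsGT_zero (one_pos)
      refine this.congr' ?_
      filter_upwards [self_mem_nhdsWithin] with x hx
      rw [Real.rpow_one]; ring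
    have h2 : Tendsto (fun θ : ℝ => θ * Real.log (Real.sin θ / θ)) (𝓝[>] (0:ℝ)) (𝓝 0) := by
      have hl : Tendsto (fun θ : ℝ => Real.log (Real.sin θ / θ)) (𝓝[>] (0:ℝ)) (𝓝 0) := by
        have := (Real.continuousAt_log one_ne_zero).tendsto
        rw [Real.log_one] at this
        exact this.comp (tendsto_sin_div.mono_left (nhdsWithin_mono 0 (fun x hx => ne_of_gt hx)))
      simpa using (tendsto_nhdsWithin_of_tendsto_nhds tendsto_id |>.mono_left (le_refl _)).mul hl
        |>.mono_left (le_refl _) |>.congr (fun x => rfl) |>.mono_left (le_refl _) |>.congr (fun x => rfl)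
    have key : Tendsto (fun θ : ℝ => θ * Real.log (Real.sin θ / θ) + θ * Real.log θ)
        (𝓝[>] (0:ℝ)) (𝓝 0) := by simpa using h2.add h1
    refine key.congr' ?_
    filter_upwards [Ioo_mem_nhdsGT_of_mem (show (0:ℝ) ∈ Ico (0:ℝ) π from ⟨le_refl _, pi_pos⟩)] with x hx
    have hx0 : 0 < x := hx.1
    have hs : 0 < Real.sin x := Real.sin_pos_of_pos_of_lt_pi hx0 hx.2
    rw [Real.log_div hs.ne' hx0.ne']
    ring

lemma contOn_sq_cos_div_sin :
    ContinuousOn (fun θ : ℝ => θ^2 * Real.cos θ / Real.sin θ) (Icc 0 (π/2)) := by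
  apply contOn_zero (by simp)
  · intro x hx
    have hs : Real.sin x ≠ 0 :=
      (Real.sin_pos_of_pos_of_lt_pi hx.1 (lt_of_le_of_lt hx.2 (by linarith [pi_pos]))).ne'
    exact ((continuousAt_id.pow 2).mul Real.continuous_cos.continuousAt).div
      Real.continuous_sin.continuousAt hs
  · have : Tendsto (fun θ : ℝ => (θ / Real.sin θ) * (θ * Real.cos θ)) (𝓝[>] (0:ℝ)) (𝓝 0) := by
      have h2 : Tendsto (fun θ : ℝ => θ * Real.cos θ) (𝓝[>] (0:ℝ)) (𝓝 0) := by
        have : Continuous (fun θ : ℝ => θ * Real.cos θ) := by fun_prop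
        have := this.tendsto 0
        simp only [zero_mul, Real.cos_zero] at this
        exact this.mono_left nhdsWithin_le_nhds
      simpa using tendsto_div_sin.mul h2
    exact this.congr (fun x => by ring)

lemma contOn_arcsin_sq_div :
    ContinuousOn (fun x : ℝ => Real.arcsin x ^ 2 / x) (Icc 0 1) := by
  apply contOn_zero (by simp)
  · intro x hx
    exact ((Real.continuous_arcsin.continuousAt.pow 2).div continuousAt_id hx.1.ne')
  · have hslope : Tendsto (fun x : ℝ => Real.arcsin x / x) (𝓝[≠] (0:ℝ)) (𝓝 1) := by
      have h := Real.hasDerivAt_arcsin (by norm_num : (0:ℝ) ≠ -1) (by norm_num : (0:ℝ) ≠ 1)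
      rw [hasDerivAt_iff_tendsto_slope] at h
      have : (1:ℝ) / Real.sqrt (1 - (0:ℝ) ^ 2) = 1 := by simp
      rw [this] at h
      refine h.congr (fun x => ?_)
      simp [slope_def_field, div_eq_mul_inv, mul_comm]
    have harc : Tendsto (fun x : ℝ => Real.arcsin x) (𝓝[≠] (0:ℝ)) (𝓝 0) := by
      have := Real.continuous_arcsin.tendsto 0
      simp only [Real.arcsin_zero] at this
      exact this.mono_left nhdsWithin_le_nhds
    have := hslope.mul harc
    rw [one_mul] at this
    have h2 := this.mono_left (nhdsWithin_mono 0 (fun x hx => ne_of_gt hx))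
    exact h2.congr (fun x => by ring)

lemma Gval {r : ℝ} (h0 : 0 ≤ r) (hr1 : r < 1) :
    ∫ θ in Ioc (0:ℝ) (π/2), θ * Real.log (‖1 - r * Complex.exp (2*θ*Complex.I)‖)
      = ∑' k : ℕ, -(r^k * (((-1:ℝ)^k - 1) / (4*(k:ℝ)^3))) := by
  have hpi : (0:ℝ) ≤ π/2 := by positivity
  set F : ℕ → ℝ → ℝ := fun k θ => -(θ * (r^k * Real.cos (2*(k:ℝ)*θ) / k)) with hF
  have hFcont : ∀ k, Continuous (F k) := by intro k; fun_prop
  have hFint : ∀ k, IntegrableOn (F k) (Ioc (0:ℝ) (π/2)) := fun k =>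
    (hFcont k).integrableOn_Ioc
  have hFbound : ∀ k, ∀ θ ∈ Ioc (0:ℝ) (π/2), ‖F k θ‖ ≤ (π/2) * r^k := by
    intro k θ hθ
    rw [hF]
    simp only [norm_neg, norm_mul, Real.norm_eq_abs, abs_div]
    rcases Nat.eq_zero_or_pos k with rfl | hk
    · simp
      positivity
    · have ha : |θ| ≤ π/2 := by rw [abs_of_pos hθ.1]; exact hθ.2
      have h2 : |r^k * Real.cos (2*(k:ℝ)*θ)| / |(k:ℝ)| ≤ r^k := by
        rw [abs_mul]
        have hrk : |r^k| = r^k := abs_of_nonneg (by positivity)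
        have hck : |Real.cos (2*(k:ℝ)*θ)| ≤ 1 := Real.abs_cos_le_one _
        have hk1 : (1:ℝ) ≤ |(k:ℝ)| := by
          rw [abs_of_nonneg (by positivity)]
          exact_mod_cast hk
        calc |r^k| * |Real.cos (2*(k:ℝ)*θ)| / |(k:ℝ)| ≤ r^k * 1 / 1 :=
              div_le_div₀ (by positivity)
                (by rw [hrk]; exact mul_le_mul_of_nonneg_left hck (by positivity)) one_pos hk1
          _ = r^k := by ring
      exact mul_le_mul ha h2 (by positivity) hpi
  have hmeas : volume (Ioc (0:ℝ) (π/2)) = ENNReal.ofReal (π/2) := by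
    simp [Real.volume_Ioc]
  have hIoc_norm : ∀ k, (∫ θ in Ioc (0:ℝ) (π/2), ‖F k θ‖) ≤ (π/2) * ((π/2) * r^k) := by
    intro k
    calc (∫ θ in Ioc (0:ℝ) (π/2), ‖F k θ‖)
        ≤ ∫ _θ in Ioc (0:ℝ) (π/2), (π/2) * r^k := by
          apply setIntegral_mono_on (hFint k).norm
            (integrableOn_const (by rw [hmeas]; exact ENNReal.ofReal_ne_top))
            measurableSet_Ioc (hFbound k)
      _ = (π/2) * ((π/2) * r^k) := by
          rw [setIntegral_const, measureReal_def, hmeas, ENNReal.toReal_ofReal hpi, smul_eq_mul]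
  have hsum : Summable (fun k => ∫ θ in Ioc (0:ℝ) (π/2), ‖F k θ‖) :=
    Summable.of_nonneg_of_le (fun k => integral_nonneg (fun θ => norm_nonneg _))
      hIoc_norm ((summable_geometric_of_lt_one h0 hr1).mul_left ((π/2)*(π/2))
        |>.congr (fun k => by ring))
  have hswap := MeasureTheory.integral_tsum_of_summable_integral_norm hFint hsum
  have hpt : ∀ θ ∈ Ioc (0:ℝ) (π/2),
      (∑' k, F k θ) = θ * Real.log (‖1 - r * Complex.exp (2*θ*Complex.I)‖) := by
    intro θ _
    have := ((hasSum_log_abs θ h0 hr1).mul_left (-θ)).tsum_eq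
    rw [hF]
    simp only [neg_mul, mul_neg] at this ⊢
    rw [this]
    ring
  have hFIoc : ∀ k, ∫ θ in Ioc (0:ℝ) (π/2), F k θ
      = -(r^k * (((-1:ℝ)^k - 1) / (4*(k:ℝ)^3))) := by
    intro k
    have : ∫ θ in Ioc (0:ℝ) (π/2), F k θ
        = -( (r^k / k) * ∫ θ in Ioc (0:ℝ) (π/2), θ * Real.cos (2*(k:ℝ)*θ)) := by
      rw [← MeasureTheory.integral_const_mul, ← MeasureTheory.integral_neg]
      congr 1; ext θ; rw [hF]; ring
    rw [this, ← intervalIntegral.integral_of_le hpi]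
    rcases Nat.eq_zero_or_pos k with rfl | hk
    · simp
    · rw [cosInt k hk.ne']
      rw [neg_inj, div_mul_div_comm, ← mul_div_assoc]
      congr 1
      ring
  calc ∫ θ in Ioc (0:ℝ) (π/2), θ * Real.log (‖1 - r * Complex.exp (2*θ*Complex.I)‖)
      = ∫ θ in Ioc (0:ℝ) (π/2), (∑' k, F k θ) := by
        apply setIntegral_congr_fun measurableSet_Ioc
        intro θ hθ
        exact (hpt θ hθ).symm
    _ = ∑' k, ∫ θ in Ioc (0:ℝ) (π/2), F k θ := hswap.symm
    _ = ∑' k : ℕ, -(r^k * (((-1:ℝ)^k - 1) / (4*(k:ℝ)^3))) := by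
        exact tsum_congr hFIoc

-- the lower bound on the abs, for 0 ≤ r ≤ 1
lemma abs_lower {r θ : ℝ} (hr : 0 ≤ r) (hr1 : r ≤ 1) (h0 : 0 < θ) (h1 : θ ≤ π/2) :
    Real.sin θ / 2 ≤ ‖1 - r * Complex.exp (2*θ*Complex.I)‖ := by
  have hs0 : 0 < Real.sin θ := Real.sin_pos_of_pos_of_lt_pi h0 (by linarith [pi_pos])
  have hs1 : Real.sin θ ≤ 1 := Real.sin_le_one θ
  have hA2 := abs_one_sub_exp r θ
  have hAnn : 0 ≤ ‖1 - r * Complex.exp (2*θ*Complex.I)‖ := norm_nonneg _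
  have hsq : (Real.sin θ / 2)^2 ≤ ‖1 - r * Complex.exp (2*θ*Complex.I)‖^2 := by
    rw [hA2]
    rcases le_or_gt r (1/4) with h | h
    · nlinarith
    · nlinarith
  calc Real.sin θ / 2 = Real.sqrt ((Real.sin θ / 2)^2) := (Real.sqrt_sq (by positivity)).symm
    _ ≤ Real.sqrt (‖1 - r * Complex.exp (2*θ*Complex.I)‖^2) := Real.sqrt_le_sqrt hsq
    _ = _ := Real.sqrt_sq hAnn

lemma abs_upper {r θ : ℝ} (hr : 0 ≤ r) (hr1 : r ≤ 1) :
    ‖1 - r * Complex.exp (2*θ*Complex.I)‖ ≤ 2 := by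
  have h2 : (2*(θ:ℂ)*Complex.I) = ((2*θ:ℝ):ℂ) * Complex.I := by push_cast; ring
  calc ‖1 - r * Complex.exp (2*θ*Complex.I)‖
      ≤ ‖(1:ℂ)‖ + ‖r * Complex.exp (2*θ*Complex.I)‖ :=
        norm_sub_le _ _
    _ ≤ 2 := by
        rw [norm_one, norm_mul, h2, Complex.norm_exp_ofReal_mul_I, mul_one, Complex.norm_real,
          Real.norm_of_nonneg hr]
        linarith

lemma keyIdent :
    ∫ θ in Ioc (0:ℝ) (π/2), θ * Real.log (2 * Real.sin θ)
      = ∑' k : ℕ, -((((-1:ℝ)^k - 1) / (4*(k:ℝ)^3))) := by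
  set F : ℝ → ℝ → ℝ := fun r θ => θ * Real.log (‖1 - r * Complex.exp (2*θ*Complex.I)‖)
    with hFdef
  set bound : ℝ → ℝ := fun θ => θ * (2 * Real.log 2 - Real.log (Real.sin θ)) with hbdef
  have hIoo : Ioo (0:ℝ) 1 ∈ 𝓝[<] (1:ℝ) :=
    Ioo_mem_nhdsLT_of_mem (by constructor <;> norm_num)
  -- limit of the integrals
  have hA : Tendsto (fun r => ∫ θ in Ioc (0:ℝ) (π/2), F r θ) (𝓝[<] (1:ℝ))
      (𝓝 (∫ θ in Ioc (0:ℝ) (π/2), θ * Real.log (2 * Real.sin θ))) := by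
    have hlim_eq : ∫ θ in Ioc (0:ℝ) (π/2), θ * Real.log (2 * Real.sin θ)
        = ∫ θ in Ioc (0:ℝ) (π/2), F 1 θ := by
      apply setIntegral_congr_fun measurableSet_Ioc
      intro θ hθ
      rw [hFdef]
      simp only
      rw [Complex.ofReal_one, one_mul, abs_one_sub_exp_one θ hθ.1.le (by linarith [hθ.2, pi_pos])]
    rw [hlim_eq]
    apply MeasureTheory.tendsto_integral_filter_of_dominated_convergence bound
    · -- measurability
      filter_upwards [hIoo] with r hr
      have hcont : Continuous (F r) := by
        have habs : Continuous (fun θ : ℝ => ‖1 - r * Complex.exp (2*θ*Complex.I)‖) :=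
          continuous_norm.comp (by fun_prop)
        have hne : ∀ θ : ℝ, ‖1 - r * Complex.exp (2*θ*Complex.I)‖ ≠ 0 := by
          intro θ
          have h := abs_one_sub_exp r θ
          have : 0 < (1 - r)^2 + 4*r*(Real.sin θ)^2 := by nlinarith [hr.1, hr.2, sq_nonneg (Real.sin θ)]
          intro hco
          rw [hco] at h
          nlinarith
        exact continuous_id.mul (continuous_iff_continuousAt.2 fun θ =>
          habs.continuousAt.log (hne θ))
      exact hcont.aestronglyMeasurable
    · -- bound
      filter_upwards [hIoo] with r hr
      rw [ae_restrict_iff' measurableSet_Ioc]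
      filter_upwards with θ hθ
      have hs0 : 0 < Real.sin θ := Real.sin_pos_of_pos_of_lt_pi hθ.1 (by linarith [hθ.2, pi_pos])
      have hs1 : Real.sin θ ≤ 1 := Real.sin_le_one θ
      have hlow := abs_lower hr.1.le hr.2.le hθ.1 hθ.2
      have hup := abs_upper (θ := θ) hr.1.le hr.2.le
      have hApos : 0 < ‖1 - r * Complex.exp (2*θ*Complex.I)‖ :=
        lt_of_lt_of_le (by positivity) hlow
      have hlogup : Real.log (‖1 - r * Complex.exp (2*θ*Complex.I)‖) ≤ Real.log 2 :=
        Real.log_le_log hApos hup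
      have hloglow : Real.log (Real.sin θ) - Real.log 2
          ≤ Real.log (‖1 - r * Complex.exp (2*θ*Complex.I)‖) := by
        have := Real.log_le_log (by positivity) hlow
        rwa [Real.log_div hs0.ne' (by norm_num)] at this
      have hlogsin : Real.log (Real.sin θ) ≤ 0 := Real.log_nonpos hs0.le hs1
      have hlog2 : 0 ≤ Real.log 2 := Real.log_nonneg (by norm_num)
      have habs : |Real.log (‖1 - r * Complex.exp (2*θ*Complex.I)‖)|
          ≤ 2 * Real.log 2 - Real.log (Real.sin θ) := by
        rw [abs_le]
        constructor <;> linarith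
      rw [hFdef, hbdef]
      simp only [Real.norm_eq_abs, abs_mul, abs_of_pos hθ.1]
      exact mul_le_mul_of_nonneg_left habs hθ.1.le
    · -- bound integrable
      have hcont : ContinuousOn bound (Icc 0 (π/2)) := by
        rw [hbdef]
        have h1 : ContinuousOn (fun θ : ℝ => θ * (2 * Real.log 2)) (Icc 0 (π/2)) := by fun_prop
        exact (h1.sub contOn_mul_log_sin).congr (fun θ _ => by simp only [Pi.sub_apply]; ring)
      exact (hcont.integrableOn_Icc).mono_set Ioc_subset_Icc_self
    · -- pointwise limit
      rw [ae_restrict_iff' measurableSet_Ioc]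
      filter_upwards with θ hθ
      have hs0 : 0 < Real.sin θ := Real.sin_pos_of_pos_of_lt_pi hθ.1 (by linarith [hθ.2, pi_pos])
      have hne : ‖1 - (1:ℝ) * Complex.exp (2*θ*Complex.I)‖ ≠ 0 := by
        rw [Complex.ofReal_one, one_mul, abs_one_sub_exp_one θ hθ.1.le (by linarith [hθ.2, pi_pos])]
        positivity
      have hco : ContinuousAt (fun r : ℝ => F r θ) 1 := by
        have habs : Continuous (fun r : ℝ => ‖1 - r * Complex.exp (2*θ*Complex.I)‖) :=
          continuous_norm.comp (by fun_prop)
        exact continuousAt_const.mul (habs.continuousAt.log hne)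
      exact (hco.tendsto).mono_left nhdsWithin_le_nhds
  -- limit of the sums
  have hB : Tendsto (fun r : ℝ => ∑' k : ℕ, -(r^k * (((-1:ℝ)^k - 1) / (4*(k:ℝ)^3))))
      (𝓝[<] (1:ℝ)) (𝓝 (∑' k : ℕ, -((((-1:ℝ)^k - 1) / (4*(k:ℝ)^3))))) := by
    apply tendsto_tsum_of_dominated_convergence
      (bound := fun k : ℕ => 2 / (4*(k:ℝ)^3))
    · have : Summable (fun k : ℕ => 1/(k:ℝ)^3) := by
        rw [Real.summable_one_div_nat_pow]
        norm_num
      exact (this.mul_left (1/2)).congr (fun k => by ring)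
    · intro k
      have : ContinuousAt (fun r : ℝ => -(r^k * (((-1:ℝ)^k - 1) / (4*(k:ℝ)^3)))) 1 := by
        fun_prop
      have h := this.tendsto
      simp only [one_pow, one_mul] at h
      exact h.mono_left nhdsWithin_le_nhds
    · filter_upwards [hIoo] with r hr
      intro k
      rw [norm_neg, norm_mul, Real.norm_eq_abs, Real.norm_eq_abs, abs_pow,
        abs_of_pos hr.1]
      have h1 : r^k ≤ 1 := pow_le_one₀ hr.1.le hr.2.le
      have h2 : |((-1:ℝ)^k - 1) / (4*(k:ℝ)^3)| ≤ 2/(4*(k:ℝ)^3) := by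
        rcases Nat.eq_zero_or_pos k with rfl | hk
        · norm_num
        · rw [abs_div, abs_of_nonneg (by positivity : (0:ℝ) ≤ 4*(k:ℝ)^3)]
          have hk3 : (0:ℝ) < 4*(k:ℝ)^3 := by positivity
          gcongr
          rcases Nat.even_or_odd k with h | h
          · rw [h.neg_one_pow]; simp
          · rw [h.neg_one_pow, show (-1:ℝ)-1 = -2 by ring, abs_neg]
            simp
      calc r^k * |((-1:ℝ)^k - 1) / (4*(k:ℝ)^3)| ≤ 1 * (2/(4*(k:ℝ)^3)) :=
            mul_le_mul h1 h2 (abs_nonneg _) one_pos.le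
        _ = 2/(4*(k:ℝ)^3) := one_mul _
  -- combine
  have heq : ∀ᶠ r in 𝓝[<] (1:ℝ), (∫ θ in Ioc (0:ℝ) (π/2), F r θ)
      = ∑' k : ℕ, -(r^k * (((-1:ℝ)^k - 1) / (4*(k:ℝ)^3))) := by
    filter_upwards [hIoo] with r hr
    exact Gval hr.1.le hr.2
  exact tendsto_nhds_unique (hA.congr' heq) hB

noncomputable def S : ℝ := ∑' n : ℕ, 1/((n:ℝ)+1)^3

lemma hsummable : Summable (fun k : ℕ => 1/(k:ℝ)^3) := by
  rw [Real.summable_one_div_nat_pow]; norm_num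

lemma hS : ∑' k : ℕ, 1/(k:ℝ)^3 = S := by
  rw [hsummable.tsum_eq_zero_add]
  simp [S]

lemma sumEval : ∑' k : ℕ, -((((-1:ℝ)^k - 1) / (4*(k:ℝ)^3))) = 7/16 * S := by
  set h : ℕ → ℝ := fun k => 1/(k:ℝ)^3 with hh
  set f : ℕ → ℝ := fun k => -((((-1:ℝ)^k - 1) / (4*(k:ℝ)^3))) with hf
  have hso : Summable (fun n : ℕ => h (2*n+1)) :=
    hsummable.comp_injective (fun a b hab => by omega)
  have hse : Summable (fun n : ℕ => h (2*n)) :=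
    hsummable.comp_injective (fun a b hab => by omega)
  have hfe : ∀ n : ℕ, f (2*n) = 0 := by
    intro n
    rw [hf]
    simp [pow_mul]
  have hfo : ∀ n : ℕ, f (2*n+1) = (1/2) * h (2*n+1) := by
    intro n
    rw [hf, hh]
    simp only
    have h1 : ((-1:ℝ))^(2*n+1) = -1 := by rw [pow_succ, pow_mul]; simp
    rw [h1]
    have h2 : ((2*n+1:ℕ):ℝ) ≠ 0 := by positivity
    field_simp
    ring
  have hsf_o : Summable (fun n : ℕ => f (2*n+1)) := by
    refine (hso.mul_left (1/2)).congr (fun n => (hfo n).symm)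
  have hsf_e : Summable (fun n : ℕ => f (2*n)) := by
    refine summable_zero.congr (fun n => (hfe n).symm)
  have hsplit := tsum_even_add_odd hsf_e hsf_o
  have he0 : ∑' n : ℕ, f (2*n) = 0 := by
    rw [tsum_congr hfe]; exact tsum_zero
  have ho : ∑' n : ℕ, f (2*n+1) = (1/2) * ∑' n : ℕ, h (2*n+1) := by
    rw [tsum_congr hfo, tsum_mul_left]
  -- evaluate odd part of h
  have hhsplit := tsum_even_add_odd hse hso
  have hheven : ∑' n : ℕ, h (2*n) = (1/8) * ∑' k : ℕ, h k := by
    rw [← tsum_mul_left]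
    apply tsum_congr
    intro n
    rw [hh]
    simp only
    push_cast
    rcases Nat.eq_zero_or_pos n with rfl | hn
    · simp
    · have : ((n:ℝ)) ≠ 0 := by positivity
      field_simp
      ring
  have hodd : ∑' n : ℕ, h (2*n+1) = (7/8) * ∑' k : ℕ, h k := by
    have := hhsplit
    rw [hheven] at this
    linarith
  rw [← hsplit, he0, ho, hodd, hS, zero_add]
  ring

lemma zeta3 : riemannZeta 3 = ((S : ℝ) : ℂ) := by
  have h3 : (1:ℝ) < (3:ℂ).re := by norm_num
  rw [zeta_eq_tsum_one_div_nat_add_one_cpow h3, S, Complex.ofReal_tsum]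
  apply tsum_congr
  intro n
  rw [show (3:ℂ) = ((3:ℕ):ℂ) by norm_num, Complex.cpow_natCast]
  push_cast
  ring


lemma hpi2 : (0:ℝ) ≤ π/2 := by positivity

lemma uIcc_eq : uIcc (0:ℝ) (π/2) = Icc 0 (π/2) := uIcc_of_le hpi2

-- step 1 : substitution
lemma subst :
    ∫ x in (0:ℝ)..1, Real.arcsin x ^ 2 / x
      = ∫ θ in (0:ℝ)..(π/2), θ^2 * Real.cos θ / Real.sin θ := by
  have h1 : ∫ θ in (0:ℝ)..(π/2), Real.cos θ •
      ((fun x => Real.arcsin x ^ 2 / x) ∘ Real.sin) θ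
      = ∫ x in (Real.sin 0)..(Real.sin (π/2)), Real.arcsin x ^ 2 / x := by
    apply intervalIntegral.integral_comp_smul_deriv'
    · intro x _
      exact Real.hasDerivAt_sin x
    · exact Real.continuous_cos.continuousOn
    · apply contOn_arcsin_sq_div.mono
      intro y hy
      obtain ⟨θ, hθ, rfl⟩ := hy
      rw [uIcc_eq] at hθ
      exact ⟨Real.sin_nonneg_of_nonneg_of_le_pi hθ.1 (by linarith [hθ.2, pi_pos]),
        Real.sin_le_one _⟩
  rw [Real.sin_zero, Real.sin_pi_div_two] at h1
  rw [← h1]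
  apply intervalIntegral.integral_congr
  intro θ hθ
  rw [uIcc_eq] at hθ
  simp only [Function.comp_apply, smul_eq_mul]
  rw [Real.arcsin_sin (by linarith [hθ.1, pi_pos]) hθ.2]
  ring

-- step 2 : integration by parts
lemma parts :
    ∫ θ in (0:ℝ)..(π/2), θ^2 * Real.cos θ / Real.sin θ
      = -2 * ∫ θ in (0:ℝ)..(π/2), θ * Real.log (Real.sin θ) := by
  set f : ℝ → ℝ := fun θ => 2 * (θ * Real.log (Real.sin θ)) + θ^2 * Real.cos θ / Real.sin θ
    with hfdef
  have hcont1 : ContinuousOn (fun θ : ℝ => 2 * (θ * Real.log (Real.sin θ))) (Icc 0 (π/2)) :=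
    continuousOn_const.mul contOn_mul_log_sin
  have hcontf : ContinuousOn f (Icc 0 (π/2)) := hcont1.add contOn_sq_cos_div_sin
  have hint1 : IntervalIntegrable (fun θ : ℝ => 2 * (θ * Real.log (Real.sin θ)))
      volume 0 (π/2) := (hcont1.mono (by rw [uIcc_eq]) ).intervalIntegrable
  have hint2 : IntervalIntegrable (fun θ : ℝ => θ^2 * Real.cos θ / Real.sin θ)
      volume 0 (π/2) := (contOn_sq_cos_div_sin.mono (by rw [uIcc_eq])).intervalIntegrable
  have hFcont : ContinuousOn (fun θ : ℝ => θ^2 * Real.log (Real.sin θ)) (Icc 0 (π/2)) := by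
    have := continuousOn_id.mul contOn_mul_log_sin
    exact this.congr (fun θ _ => by simp only [Pi.mul_apply, id]; ring)
  have hderiv : ∀ θ ∈ Ioo (0:ℝ) (π/2), HasDerivAt (fun t : ℝ => t^2 * Real.log (Real.sin t))
      (f θ) θ := by
    intro θ hθ
    have hs : 0 < Real.sin θ := Real.sin_pos_of_pos_of_lt_pi hθ.1 (by linarith [hθ.2, pi_pos])
    have hlog : HasDerivAt (fun t : ℝ => Real.log (Real.sin t)) ((Real.sin θ)⁻¹ * Real.cos θ) θ :=
      (Real.hasDerivAt_log hs.ne').comp θ (Real.hasDerivAt_sin θ)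
    have hpow : HasDerivAt (fun t : ℝ => t^2) (2*θ) θ := by
      simpa using hasDerivAt_pow 2 θ
    have := hpow.mul hlog
    refine this.congr_deriv ?_
    rw [hfdef]
    simp only
    rw [div_eq_mul_inv]
    ring
  have hFTC := intervalIntegral.integral_eq_sub_of_hasDeriv_right_of_le hpi2
    hFcont
    (fun θ hθ => (hderiv θ hθ).hasDerivWithinAt)
    (hint1.add hint2)
  have hzero : ∫ θ in (0:ℝ)..(π/2), f θ = 0 := by
    rw [hFTC]
    simp
  rw [hfdef] at hzero
  rw [intervalIntegral.integral_add hint1 hint2, intervalIntegral.integral_const_mul] at hzero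
  linarith

-- step 3 : the J integral
lemma Jval :
    ∫ θ in (0:ℝ)..(π/2), θ * Real.log (Real.sin θ)
      = 7/16 * S - π^2/8 * Real.log 2 := by
  have hint1 : IntegrableOn (fun θ : ℝ => θ * Real.log (Real.sin θ)) (Ioc 0 (π/2)) :=
    contOn_mul_log_sin.integrableOn_Icc.mono_set Ioc_subset_Icc_self
  have hint2 : IntegrableOn (fun θ : ℝ => θ * Real.log 2) (Ioc 0 (π/2)) :=
    ((continuous_id.mul continuous_const).integrableOn_Icc
      (a := (0:ℝ)) (b := π/2)).mono_set Ioc_subset_Icc_self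
  have hsplit : ∫ θ in Ioc (0:ℝ) (π/2), θ * Real.log (2 * Real.sin θ)
      = (∫ θ in Ioc (0:ℝ) (π/2), θ * Real.log 2)
        + ∫ θ in Ioc (0:ℝ) (π/2), θ * Real.log (Real.sin θ) := by
    rw [← integral_add hint2 hint1]
    apply setIntegral_congr_fun measurableSet_Ioc
    intro θ hθ
    have hs : 0 < Real.sin θ := Real.sin_pos_of_pos_of_lt_pi hθ.1 (by linarith [hθ.2, pi_pos])
    simp only
    rw [Real.log_mul (by norm_num) hs.ne']
    ring
  have hlin : ∫ θ in Ioc (0:ℝ) (π/2), θ * Real.log 2 = π^2/8 * Real.log 2 := by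
    rw [← intervalIntegral.integral_of_le hpi2]
    rw [intervalIntegral.integral_mul_const, integral_id]
    ring
  have hkey := keyIdent
  rw [sumEval, hsplit, hlin] at hkey
  rw [intervalIntegral.integral_of_le hpi2]
  linarith

open Real in
theorem arcsin_sq_div_x_integral :
    ((∫ x in (0:ℝ)..1, (arcsin x) ^ 2 / x : ℝ) : ℂ) =
      (π ^ 2 / 4) * Real.log 2 - (7 / 8 : ℂ) * riemannZeta 3 := by
  have hreal : ∫ x in (0:ℝ)..1, Real.arcsin x ^ 2 / x
      = π^2/4 * Real.log 2 - 7/8 * S := by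
    rw [subst, parts, Jval]
    ring
  rw [hreal, zeta3]
  push_cast
  ring
end

section
/- For every real y with |y| ≤ 1, (arsinh y)² = (1/2) · ∑_{n=1}^∞ (−1)^{n−1} · ((2n)!!/(2n−1)!!) · y^{2n}/n², where (2n)!! = 2n·(2n−2)···2 and (2n−1)!! = (2n−1)·(2n−3)···1. -/
open Real Nat Filter Topology

/-- The coefficient sequence `b n = (-1)^n (2n)‼ / (2n+1)‼`. -/
noncomputable def bcoef (n : ℕ) : ℝ := (-1) ^ n * ((2 * n)‼ : ℝ) / ((2 * n + 1)‼ : ℝ)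

lemma bcoef_zero : bcoef 0 = 1 := by simp [bcoef, Nat.doubleFactorial]

lemma odd_df_pos (n : ℕ) : (0 : ℝ) < ((2 * n + 1)‼ : ℝ) := by
  exact_mod_cast Nat.doubleFactorial_pos _

lemma bcoef_rec (n : ℕ) : (2 * (n : ℝ) + 3) * bcoef (n + 1) = -((2 * n + 2) * bcoef n) := by
  have h1 : 2 * (n + 1) = 2 * n + 2 := by ring
  have h2 : 2 * n + 2 + 1 = 2 * n + 1 + 2 := by ring
  have e1 : ((2 * n + 2)‼ : ℕ) = (2 * n + 2) * (2 * n)‼ := Nat.doubleFactorial_add_two _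
  have e2 : ((2 * n + 1 + 2)‼ : ℕ) = (2 * n + 3) * (2 * n + 1)‼ := Nat.doubleFactorial_add_two _
  have hpos := odd_df_pos n
  unfold bcoef
  rw [h1, h2, e1, e2]
  push_cast
  field_simp
  ring

lemma bcoef_abs_le_one (n : ℕ) : |bcoef n| ≤ 1 := by
  have hnum : ∀ m : ℕ, ((2 * m)‼ : ℕ) ≤ (2 * m + 1)‼ := by
    intro m
    induction m with
    | zero => simp [Nat.doubleFactorial]
    | succ k ih =>
      have h1 : 2 * (k + 1) = 2 * k + 2 := by ring
      have h2 : 2 * k + 2 + 1 = 2 * k + 1 + 2 := by ring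
      rw [h1, h2, Nat.doubleFactorial_add_two, Nat.doubleFactorial_add_two]
      exact Nat.mul_le_mul (by omega) ih
  have hpos := odd_df_pos n
  have habs : |bcoef n| = ((2 * n)‼ : ℝ) / ((2 * n + 1)‼ : ℝ) := by
    rw [bcoef, abs_div, abs_mul, abs_pow, abs_neg, abs_one, one_pow, one_mul,
      abs_of_nonneg (by positivity : (0:ℝ) ≤ ((2 * n)‼ : ℝ)), abs_of_nonneg hpos.le]
  rw [habs, div_le_one hpos]
  exact_mod_cast hnum n

lemma bcoef_sq_le (n : ℕ) : (bcoef n) ^ 2 * ((n : ℝ) + 1) ≤ 4 := by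
  induction n with
  | zero => rw [bcoef_zero]; norm_num
  | succ k ih =>
    have hk1 : (0:ℝ) < (k:ℝ) + 1 := by positivity
    have hsq : bcoef (k+1) ^ 2 * (2*(k:ℝ)+3) ^ 2 = (2*(k:ℝ)+2) ^ 2 * bcoef k ^ 2 := by
      linear_combination ((2*(k:ℝ)+3) * bcoef (k+1) - (2*(k:ℝ)+2) * bcoef k) * bcoef_rec k
    push_cast
    calc bcoef (k+1) ^ 2 * ((k:ℝ) + 1 + 1)
        = (2*(k:ℝ)+2) ^ 2 * bcoef k ^ 2 * ((k:ℝ)+2) / (2*(k:ℝ)+3) ^ 2 := by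
          rw [eq_div_iff (by positivity : ((2*(k:ℝ)+3)^2) ≠ 0)]
          linear_combination ((k:ℝ)+2) * hsq
      _ ≤ 4 := by
          rw [div_le_iff₀ (by positivity : (0:ℝ) < (2*(k:ℝ)+3)^2)]
          nlinarith [mul_le_mul_of_nonneg_left ih
            (show (0:ℝ) ≤ (2*(k:ℝ)+2)^2 * ((k:ℝ)+2) from by positivity), hk1,
            sq_nonneg (bcoef k)]

/-- Master summability lemma: coefficients of at most linear growth give summable
series inside the unit interval. -/
lemma key_summable {x : ℝ} (hx : |x| < 1) (c : ℕ → ℝ) (hc : ∀ n, |c n| ≤ 4 * (n + 1)) :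
    Summable (fun n : ℕ => c n * x ^ (2 * n)) := by
  have hx2 : |x ^ 2| < 1 := by
    rw [abs_pow]
    exact pow_lt_one₀ (abs_nonneg x) hx (by norm_num)
  have hgeom : Summable (fun n : ℕ => 4 * (((n:ℝ) + 1) * |x ^ 2| ^ n)) := by
    apply Summable.mul_left
    have h1 : Summable (fun n : ℕ => (n:ℝ) * |x ^ 2| ^ n) := by
      simpa using summable_pow_mul_geometric_of_norm_lt_one (R := ℝ) 1 (by simpa using hx2)
    have h2 : Summable (fun n : ℕ => |x ^ 2| ^ n) :=
      summable_geometric_of_lt_one (abs_nonneg _) hx2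
    simpa [add_mul] using h1.add h2
  apply Summable.of_norm_bounded hgeom
  intro n
  rw [Real.norm_eq_abs, abs_mul]
  have hxp : |x ^ (2 * n)| = |x ^ 2| ^ n := by
    rw [pow_mul, abs_pow]
  rw [hxp]
  have h1 : |c n| * |x ^ 2| ^ n ≤ (4 * ((n:ℝ) + 1)) * |x ^ 2| ^ n :=
    mul_le_mul_of_nonneg_right (hc n) (by positivity)
  calc |c n| * |x ^ 2| ^ n ≤ 4 * ((n:ℝ) + 1) * |x ^ 2| ^ n := h1
    _ = 4 * (((n:ℝ) + 1) * |x ^ 2| ^ n) := by ring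

/-- The series `G y = ∑ b n y^(2n+1)`. -/
noncomputable def Gfun (y : ℝ) : ℝ := ∑' n : ℕ, bcoef n * y ^ (2 * n + 1)

/-- The main series `F y = ∑ 2 b n / (n+1) * y^(2n+2)`. -/
noncomputable def Ffun (y : ℝ) : ℝ := ∑' n : ℕ, 2 * bcoef n / ((n : ℝ) + 1) * y ^ (2 * n + 2)

lemma summable_G {y : ℝ} (hy : |y| < 1) :
    Summable (fun n : ℕ => bcoef n * y ^ (2 * n + 1)) := by
  have := key_summable hy (fun n => bcoef n * y) (fun n => by
    have h1 : |bcoef n * y| ≤ 1 := by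
      rw [abs_mul]
      calc |bcoef n| * |y| ≤ 1 * 1 :=
        mul_le_mul (bcoef_abs_le_one n) hy.le (abs_nonneg _) (by norm_num)
      _ = 1 := by norm_num
    have h2 : (0:ℝ) ≤ (n:ℝ) := Nat.cast_nonneg n
    linarith)
  apply this.congr
  intro n
  rw [pow_succ]
  ring

lemma summable_G' {y : ℝ} (hy : |y| < 1) :
    Summable (fun n : ℕ => bcoef n * ((2 * (n:ℝ) + 1) * y ^ (2 * n))) := by
  have := key_summable hy (fun n => bcoef n * (2 * (n:ℝ) + 1)) (fun n => by
    rw [abs_mul]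
    have h2 : (0:ℝ) ≤ (n:ℝ) := Nat.cast_nonneg n
    calc |bcoef n| * |2 * (n:ℝ) + 1| ≤ 1 * (2 * (n:ℝ) + 1) := by
          apply mul_le_mul (bcoef_abs_le_one n) (le_of_eq (abs_of_nonneg (by positivity)))
            (abs_nonneg _) (by norm_num)
      _ ≤ 4 * ((n:ℝ) + 1) := by linarith
    )
  apply this.congr
  intro n
  ring

lemma hasDerivAt_G {y : ℝ} (hy : |y| < 1) :
    HasDerivAt Gfun (∑' n : ℕ, bcoef n * ((2 * (n:ℝ) + 1) * y ^ (2 * n))) y := by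
  set r : ℝ := (|y| + 1) / 2 with hr
  have hr0 : 0 < r := by positivity
  have hyr : |y| < r := by rw [hr]; linarith
  have hr1 : r < 1 := by rw [hr]; linarith
  have hrabs : |r| < 1 := by rwa [abs_of_pos hr0]
  have hu : Summable (fun n : ℕ => (2 * (n:ℝ) + 1) * r ^ (2 * n)) := by
    apply key_summable hrabs
    intro n
    have h2 : (0:ℝ) ≤ (n:ℝ) := Nat.cast_nonneg n
    rw [abs_of_nonneg (by positivity : (0:ℝ) ≤ 2 * (n:ℝ) + 1)]
    linarith
  apply hasDerivAt_tsum_of_isPreconnected hu Metric.isOpen_ball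
    (convex_ball (0:ℝ) r).isPreconnected
    (g := fun n z => bcoef n * z ^ (2 * n + 1))
    (g' := fun n z => bcoef n * ((2 * (n:ℝ) + 1) * z ^ (2 * n)))
    (y₀ := 0)
  · intro n z _
    have h := (hasDerivAt_pow (2 * n + 1) z).const_mul (bcoef n)
    refine h.congr_deriv (Eq.symm ?_)
    push_cast [Nat.add_sub_cancel]
    ring
  · intro n z hz
    rw [mem_ball_zero_iff, Real.norm_eq_abs] at hz
    rw [Real.norm_eq_abs, abs_mul, abs_mul]
    have h1 : |bcoef n| * (|2 * (n:ℝ) + 1| * |z ^ (2*n)|) ≤ 1 * ((2 * (n:ℝ) + 1) * r ^ (2*n)) := by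
      apply mul_le_mul (bcoef_abs_le_one n) _ (by positivity) (by norm_num)
      rw [abs_of_nonneg (by positivity : (0:ℝ) ≤ 2 * (n:ℝ) + 1)]
      apply mul_le_mul_of_nonneg_left _ (by positivity)
      rw [abs_pow]
      exact pow_le_pow_left₀ (abs_nonneg z) hz.le _
    linarith
  · rw [mem_ball_zero_iff, Real.norm_eq_abs, abs_zero]; exact hr0
  · apply summable_zero.congr
    intro n
    simp
  · rw [mem_ball_zero_iff, Real.norm_eq_abs]; exact hyr

lemma G_ode {y : ℝ} (hy : |y| < 1) :
    (1 + y ^ 2) * (∑' n : ℕ, bcoef n * ((2 * (n:ℝ) + 1) * y ^ (2 * n))) + y * Gfun y = 1 := by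
  set D : ℕ → ℝ := fun n => bcoef n * ((2 * (n:ℝ) + 1) * y ^ (2 * n)) with hD
  have hDsum : Summable D := summable_G' hy
  have hGsum : Summable (fun n : ℕ => bcoef n * y ^ (2 * n + 1)) := summable_G hy
  have hsum2 : Summable (fun n : ℕ => y ^ 2 * D n) := hDsum.mul_left _
  have hsum3 : Summable (fun n : ℕ => y * (bcoef n * y ^ (2 * n + 1))) := hGsum.mul_left _
  have expand : (1 + y ^ 2) * (∑' n, D n) + y * Gfun y
      = ∑' n : ℕ, (D n + (y ^ 2 * D n + y * (bcoef n * y ^ (2 * n + 1)))) := by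
    rw [Summable.tsum_add hDsum (hsum2.add hsum3), Summable.tsum_add hsum2 hsum3,
      tsum_mul_left, tsum_mul_left, Gfun]
    ring
  rw [expand]
  have htel : ∀ n : ℕ, D n + (y ^ 2 * D n + y * (bcoef n * y ^ (2 * n + 1))) = D n - D (n + 1) := by
    intro n
    have hrec := bcoef_rec n
    simp only [hD]
    push_cast
    linear_combination (y ^ (2*n) * y ^ 2) * hrec
  have hD0 : D 0 = 1 := by simp [hD, bcoef_zero]
  have hDtail : Summable (fun n : ℕ => D (n + 1)) := (summable_nat_add_iff 1).2 hDsum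
  have hCsum : Summable (fun n : ℕ => D n - D (n + 1)) := hDsum.sub hDtail
  have hDlim : Tendsto D atTop (𝓝 0) := hDsum.tendsto_atTop_zero
  have hsum_eq : ∑' n : ℕ, (D n - D (n + 1)) = D 0 := by
    have hten : Tendsto (fun n : ℕ => ∑ i ∈ Finset.range n, (D i - D (i + 1))) atTop (𝓝 (D 0)) := by
      have heq : ∀ n : ℕ, ∑ i ∈ Finset.range n, (D i - D (i + 1)) = D 0 - D n := fun n =>
        Finset.sum_range_sub' D n
      simp only [heq]
      simpa using tendsto_const_nhds.sub hDlim
    exact ((hCsum.hasSum_iff_tendsto_nat).2 hten).tsum_eq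
  calc ∑' n : ℕ, (D n + (y ^ 2 * D n + y * (bcoef n * y ^ (2 * n + 1))))
      = ∑' n : ℕ, (D n - D (n + 1)) := tsum_congr htel
    _ = D 0 := hsum_eq
    _ = 1 := hD0

lemma sqrt_one_add_sq_pos (y : ℝ) : 0 < Real.sqrt (1 + y ^ 2) :=
  Real.sqrt_pos.2 (by positivity)

lemma hasDerivAt_sqrt_one_add_sq (y : ℝ) :
    HasDerivAt (fun z : ℝ => Real.sqrt (1 + z ^ 2)) (y / Real.sqrt (1 + y ^ 2)) y := by
  have h1 : HasDerivAt (fun z : ℝ => 1 + z ^ 2) (2 * y) y := by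
    simpa using (hasDerivAt_pow 2 y).const_add 1
  have h2 := (Real.hasDerivAt_sqrt (by positivity : (1:ℝ) + y ^ 2 ≠ 0)).comp y h1
  refine h2.congr_deriv (Eq.symm ?_)
  field_simp

/-- Constancy from zero derivative on `Ioo (-1) 1`. -/
lemma const_of_deriv_zero {f : ℝ → ℝ} (h : ∀ x ∈ Set.Ioo (-1:ℝ) 1, HasDerivAt f 0 x)
    {y : ℝ} (hy : y ∈ Set.Ioo (-1:ℝ) 1) : f y = f 0 := by
  apply (convex_Ioo (-1:ℝ) 1).is_const_of_fderivWithin_eq_zero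
    (fun x hx => (h x hx).differentiableAt.differentiableWithinAt) _ hy
    (by norm_num : (0:ℝ) ∈ Set.Ioo (-1:ℝ) 1)
  intro x hx
  rw [fderivWithin_of_isOpen isOpen_Ioo hx, (h x hx).hasFDerivAt.fderiv]
  ext
  simp

lemma G_eq {y : ℝ} (hy : |y| < 1) : Gfun y * Real.sqrt (1 + y ^ 2) = Real.arsinh y := by
  set V : ℝ → ℝ := fun z => Gfun z * Real.sqrt (1 + z ^ 2) - Real.arsinh z with hV
  have hderiv : ∀ x ∈ Set.Ioo (-1:ℝ) 1, HasDerivAt V 0 x := by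
    intro x hx
    have hxabs : |x| < 1 := abs_lt.2 ⟨hx.1, hx.2⟩
    have hG := hasDerivAt_G hxabs
    have hs := hasDerivAt_sqrt_one_add_sq x
    have ha := Real.hasDerivAt_arsinh x
    have h := (hG.mul hs).sub ha
    refine h.congr_deriv (Eq.symm ?_)
    have hode := G_ode hxabs
    have hsp := sqrt_one_add_sq_pos x
    have hsq : Real.sqrt (1 + x ^ 2) ^ 2 = 1 + x ^ 2 := Real.sq_sqrt (by positivity)
    set S := ∑' n : ℕ, bcoef n * ((2 * (n:ℝ) + 1) * x ^ (2 * n)) with hS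
    rw [eq_comm]
    have hz : S * Real.sqrt (1 + x ^ 2) + Gfun x * (x / Real.sqrt (1 + x ^ 2))
        - (Real.sqrt (1 + x ^ 2))⁻¹
        = ((1 + x ^ 2) * S + x * Gfun x - 1) / Real.sqrt (1 + x ^ 2) := by
      field_simp
      linear_combination S * hsq
    rw [hz, hode]
    simp
  have h0 : V 0 = 0 := by
    have hG0 : Gfun 0 = 0 := by
      rw [Gfun]
      have hzero : ∀ n : ℕ, bcoef n * (0:ℝ) ^ (2 * n + 1) = 0 := by intro n; simp
      rw [tsum_congr hzero, tsum_zero]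
    simp [hV, hG0, Real.arsinh_zero]
  have hy' : y ∈ Set.Ioo (-1:ℝ) 1 := ⟨(abs_lt.1 hy).1, (abs_lt.1 hy).2⟩
  have hc := const_of_deriv_zero hderiv hy'
  rw [h0] at hc
  have hc' : Gfun y * Real.sqrt (1 + y ^ 2) - Real.arsinh y = 0 := hc
  linarith

lemma psum : Summable (fun n : ℕ => 4 / (((n:ℝ) + 1) * Real.sqrt ((n:ℝ) + 1))) := by
  have h32 : Summable (fun n : ℕ => ((n:ℝ) ^ ((3:ℝ)/2))⁻¹) :=
    Real.summable_nat_rpow_inv.2 (by norm_num)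
  have hshift : Summable (fun n : ℕ => (((n:ℝ) + 1) ^ ((3:ℝ)/2))⁻¹) := by
    have h := (summable_nat_add_iff (f := fun n : ℕ => ((n:ℝ) ^ ((3:ℝ)/2))⁻¹) 1).2 h32
    apply h.congr
    intro n
    push_cast
    ring_nf
  have heq : ∀ n : ℕ, 4 * (((n:ℝ) + 1) ^ ((3:ℝ)/2))⁻¹
      = 4 / (((n:ℝ) + 1) * Real.sqrt ((n:ℝ) + 1)) := by
    intro n
    have hp : (0:ℝ) < (n:ℝ) + 1 := by positivity
    rw [Real.sqrt_eq_rpow,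
      show ((3:ℝ)/2) = 1 + 1/2 by norm_num, Real.rpow_add hp, Real.rpow_one]
    ring
  exact (hshift.mul_left 4).congr heq

lemma bcoef_abs_le_sqrt (n : ℕ) : |bcoef n| ≤ 2 / Real.sqrt ((n:ℝ) + 1) := by
  have hp : (0:ℝ) < (n:ℝ) + 1 := by positivity
  have hs := Real.sqrt_pos.2 hp
  rw [le_div_iff₀ hs]
  have h1 : (|bcoef n| * Real.sqrt ((n:ℝ)+1)) ^ 2 = bcoef n ^ 2 * ((n:ℝ) + 1) := by
    rw [mul_pow, sq_abs, Real.sq_sqrt hp.le]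
  nlinarith [bcoef_sq_le n, abs_nonneg (bcoef n), Real.sqrt_nonneg ((n:ℝ)+1),
    mul_nonneg (abs_nonneg (bcoef n)) (Real.sqrt_nonneg ((n:ℝ)+1))]

lemma Fbound (n : ℕ) {y : ℝ} (hy : |y| ≤ 1) :
    ‖2 * bcoef n / ((n:ℝ) + 1) * y ^ (2 * n + 2)‖ ≤ 4 / (((n:ℝ) + 1) * Real.sqrt ((n:ℝ) + 1)) := by
  have hp : (0:ℝ) < (n:ℝ) + 1 := by positivity
  have hs := Real.sqrt_pos.2 hp
  have hyp : |y| ^ (2*n+2) ≤ 1 := pow_le_one₀ (abs_nonneg y) hy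
  have hb := bcoef_abs_le_sqrt n
  calc ‖2 * bcoef n / ((n:ℝ)+1) * y ^ (2*n+2)‖
      = 2 * |bcoef n| / ((n:ℝ)+1) * |y| ^ (2*n+2) := by
        rw [Real.norm_eq_abs, abs_mul, abs_div, abs_mul, abs_two, abs_of_pos hp, abs_pow]
    _ ≤ 2 * (2 / Real.sqrt ((n:ℝ)+1)) / ((n:ℝ)+1) * 1 := by
        apply mul_le_mul _ hyp (by positivity) (by positivity)
        gcongr
    _ = 4 / (((n:ℝ)+1) * Real.sqrt ((n:ℝ)+1)) := by
        rw [mul_one]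
        field_simp
        ring

lemma hasDerivAt_F {y : ℝ} (hy : |y| < 1) :
    HasDerivAt Ffun (∑' n : ℕ, 4 * (bcoef n * y ^ (2 * n + 1))) y := by
  set r : ℝ := (|y| + 1) / 2 with hr
  have hr0 : 0 < r := by positivity
  have hyr : |y| < r := by rw [hr]; linarith
  have hr1 : r < 1 := by rw [hr]; linarith
  have hrabs : |r| < 1 := by rwa [abs_of_pos hr0]
  have hu : Summable (fun n : ℕ => 4 * (r * r ^ (2 * n))) := by
    have h := key_summable hrabs (fun _ => 4 * r) (fun n => by
      have h2 : (0:ℝ) ≤ (n:ℝ) := Nat.cast_nonneg n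
      rw [abs_of_nonneg (by positivity : (0:ℝ) ≤ 4 * r)]
      nlinarith)
    apply h.congr
    intro n
    ring
  apply hasDerivAt_tsum_of_isPreconnected hu Metric.isOpen_ball
    (convex_ball (0:ℝ) r).isPreconnected
    (g := fun n z => 2 * bcoef n / ((n:ℝ) + 1) * z ^ (2 * n + 2))
    (g' := fun n z => 4 * (bcoef n * z ^ (2 * n + 1)))
    (y₀ := 0)
  · intro n z _
    have h := (hasDerivAt_pow (2 * n + 2) z).const_mul (2 * bcoef n / ((n:ℝ) + 1))
    refine h.congr_deriv (Eq.symm ?_)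
    have hne : ((n:ℝ) + 1) ≠ 0 := by positivity
    push_cast [Nat.add_sub_cancel]
    field_simp
    ring
  · intro n z hz
    rw [mem_ball_zero_iff, Real.norm_eq_abs] at hz
    rw [Real.norm_eq_abs, abs_mul]
    have h2 : |z ^ (2 * n + 1)| ≤ r ^ (2 * n + 1) := by
      rw [abs_pow]
      exact pow_le_pow_left₀ (abs_nonneg z) hz.le _
    have h1 : |bcoef n * z ^ (2 * n + 1)| ≤ r * r ^ (2 * n) := by
      rw [abs_mul]
      calc |bcoef n| * |z ^ (2*n+1)| ≤ 1 * r ^ (2*n+1) :=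
            mul_le_mul (bcoef_abs_le_one n) h2 (abs_nonneg _) (by norm_num)
        _ = r * r ^ (2 * n) := by rw [one_mul, _root_.pow_succ']
    have h4 : |(4:ℝ)| = 4 := by norm_num
    rw [h4]
    exact mul_le_mul_of_nonneg_left h1 (by norm_num)
  · rw [mem_ball_zero_iff, Real.norm_eq_abs, abs_zero]; exact hr0
  · apply summable_zero.congr
    intro n
    simp
  · rw [mem_ball_zero_iff, Real.norm_eq_abs]; exact hyr

lemma F_eq_open {y : ℝ} (hy : |y| < 1) : Ffun y = 2 * Real.arsinh y ^ 2 := by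
  set W : ℝ → ℝ := fun z => Ffun z - 2 * Real.arsinh z ^ 2 with hW
  have hderiv : ∀ x ∈ Set.Ioo (-1:ℝ) 1, HasDerivAt W 0 x := by
    intro x hx
    have hxabs : |x| < 1 := abs_lt.2 ⟨hx.1, hx.2⟩
    have hF := hasDerivAt_F hxabs
    have ha := ((Real.hasDerivAt_arsinh x).pow 2).const_mul (2:ℝ)
    have h := hF.sub ha
    refine h.congr_deriv (Eq.symm ?_)
    have hGx : ∑' n : ℕ, 4 * (bcoef n * x ^ (2 * n + 1)) = 4 * Gfun x := by
      rw [Gfun, tsum_mul_left]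
    have hsp := sqrt_one_add_sq_pos x
    have harsinh : Gfun x = Real.arsinh x / Real.sqrt (1 + x ^ 2) := by
      rw [← G_eq hxabs]
      field_simp
    rw [eq_comm, hGx, harsinh]
    push_cast [pow_one]
    field_simp
    ring
  have h0 : W 0 = 0 := by
    have hF0 : Ffun 0 = 0 := by
      rw [Ffun]
      have hzero : ∀ n : ℕ, 2 * bcoef n / ((n:ℝ) + 1) * (0:ℝ) ^ (2 * n + 2) = 0 := by
        intro n; simp
      rw [tsum_congr hzero, tsum_zero]
    simp [hW, hF0, Real.arsinh_zero]
  have hy' : y ∈ Set.Ioo (-1:ℝ) 1 := ⟨(abs_lt.1 hy).1, (abs_lt.1 hy).2⟩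
  have hc := const_of_deriv_zero hderiv hy'
  rw [h0] at hc
  have hc' : Ffun y - 2 * Real.arsinh y ^ 2 = 0 := hc
  linarith

lemma continuousOn_F : ContinuousOn Ffun (Set.Icc (-1:ℝ) 1) := by
  apply continuousOn_tsum (u := fun n : ℕ => 4 / (((n:ℝ) + 1) * Real.sqrt ((n:ℝ) + 1)))
  · intro i
    exact (continuous_const.mul (continuous_pow _)).continuousOn
  · exact psum
  · intro n x hx
    have hxabs : |x| ≤ 1 := abs_le.2 ⟨hx.1, hx.2⟩
    exact Fbound n hxabs

lemma F_eq {y : ℝ} (hy : |y| ≤ 1) : Ffun y = 2 * Real.arsinh y ^ 2 := by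
  rcases lt_or_eq_of_le hy with h | h
  · exact F_eq_open h
  · have hmem : y ∈ Set.Icc (-1:ℝ) 1 := ⟨(abs_le.1 hy).1, (abs_le.1 hy).2⟩
    have hne : (𝓝[Set.Ioo (-1:ℝ) 1] y).NeBot := by
      rcases (abs_eq (by norm_num : (0:ℝ) ≤ 1)).1 h with rfl | rfl
      · exact right_nhdsWithin_Ioo_neBot (by norm_num)
      · exact left_nhdsWithin_Ioo_neBot (by norm_num)
    have h1 : Tendsto Ffun (𝓝[Set.Ioo (-1:ℝ) 1] y) (𝓝 (Ffun y)) :=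
      (continuousOn_F y hmem).mono Set.Ioo_subset_Icc_self
    have h2 : Tendsto (fun z => 2 * Real.arsinh z ^ 2) (𝓝[Set.Ioo (-1:ℝ) 1] y)
        (𝓝 (2 * Real.arsinh y ^ 2)) :=
      ((continuous_const.mul (Real.continuous_arsinh.pow 2)).continuousAt).continuousWithinAt
    have heq : Ffun =ᶠ[𝓝[Set.Ioo (-1:ℝ) 1] y] (fun z => 2 * Real.arsinh z ^ 2) := by
      filter_upwards [self_mem_nhdsWithin] with z hz
      exact F_eq_open (abs_lt.2 ⟨hz.1, hz.2⟩)
    exact tendsto_nhds_unique (h1.congr' heq) h2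

open Real Nat in
theorem arsinh_sq_series (y : ℝ) (hy : |y| ≤ 1) :
    (arsinh y) ^ 2 =
      (1 / 2) * ∑' n : ℕ,
        (-1 : ℝ) ^ n * (((2 * (n + 1))‼ : ℝ) / ((2 * (n + 1) - 1)‼ : ℝ)) *
          y ^ (2 * (n + 1)) / (n + 1 : ℝ) ^ 2 := by
  have hterm : ∀ n : ℕ,
      (-1 : ℝ) ^ n * (((2 * (n + 1))‼ : ℝ) / ((2 * (n + 1) - 1)‼ : ℝ)) *
          y ^ (2 * (n + 1)) / (n + 1 : ℝ) ^ 2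
      = 2 * bcoef n / ((n : ℝ) + 1) * y ^ (2 * n + 2) := by
    intro n
    have h1 : 2 * (n + 1) = 2 * n + 2 := by ring
    have h2 : 2 * (n + 1) - 1 = 2 * n + 1 := by omega
    have e1 : ((2 * n + 2)‼ : ℕ) = (2 * n + 2) * (2 * n)‼ := Nat.doubleFactorial_add_two _
    have hpos := odd_df_pos n
    have hne : ((n:ℝ) + 1) ≠ 0 := by positivity
    rw [h2, h1, e1, bcoef]
    push_cast
    field_simp
  rw [tsum_congr hterm]
  have hF := F_eq hy
  rw [Ffun] at hF
  linarith
end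

section
/- For every real y with |y| ≤ 1, arsinh y = ∑_{n=0}^∞ (−1)ⁿ · ((2n−1)!!/(2n)!!) · y^{2n+1}/(2n+1), where (2n)!! = 2n·(2n−2)···2 and (2n−1)!! = (2n−1)·(2n−3)···1 and (−1)!! = 0!! = 1. -/
open Real Nat Filter Set

namespace ArsinhSeries

/-- the double-factorial ratio -/
noncomputable def bb (n : ℕ) : ℝ := ((2 * n - 1)‼ : ℝ) / ((2 * n)‼ : ℝ)

lemma bb_pos (n : ℕ) : 0 < bb n :=
  div_pos (by exact_mod_cast Nat.doubleFactorial_pos _) (by exact_mod_cast Nat.doubleFactorial_pos _)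

lemma bb_zero : bb 0 = 1 := by simp [bb, Nat.doubleFactorial]

lemma bb_succ (n : ℕ) : bb (n + 1) = bb n * (2 * n + 1) / (2 * n + 2) := by
  have h1 : 2 * (n + 1) - 1 = 2 * n + 1 := by omega
  have h2 : (2 * n + 1)‼ = (2 * n + 1) * (2 * n - 1)‼ := Nat.doubleFactorial_add_one (2 * n)
  have h3 : (2 * (n + 1))‼ = (2 * n + 2) * (2 * n)‼ := by
    rw [show 2 * (n + 1) = 2 * n + 2 by ring, Nat.doubleFactorial_add_two]
  have hd : ((2 * n)‼ : ℝ) ≠ 0 := by exact_mod_cast (Nat.doubleFactorial_pos _).ne'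
  unfold bb
  rw [h1, h2, h3]
  push_cast
  field_simp

lemma bb_sq (n : ℕ) : bb n ^ 2 * (2 * n + 1) ≤ 1 := by
  induction n with
  | zero => simp [bb_zero]
  | succ n ih =>
    have hb := bb_pos n
    rw [bb_succ]
    have hden : (0:ℝ) < 2 * n + 2 := by positivity
    rw [div_pow, div_mul_eq_mul_div, div_le_one (by positivity)]
    push_cast
    nlinarith [sq_nonneg (bb n), sq_nonneg ((2*(n:ℝ)+1))]

lemma bb_le_sqrt (n : ℕ) : bb n ≤ 1 / Real.sqrt (2 * n + 1) := by
  have h1 : (0:ℝ) < 2 * n + 1 := by positivity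
  rw [one_div, ← Real.sqrt_inv]
  rw [Real.le_sqrt (bb_pos n).le (by positivity)]
  rw [inv_eq_one_div, le_div_iff₀ h1]
  exact bb_sq n

lemma bb_le_one (n : ℕ) : bb n ≤ 1 := by
  have h := bb_sq n
  have h1 : (1:ℝ) ≤ 2 * n + 1 := by have : (0:ℝ) ≤ n := Nat.cast_nonneg n; linarith
  nlinarith [bb_pos n]

/-- series coefficient -/
noncomputable def a (n : ℕ) : ℝ := (-1 : ℝ) ^ n * bb n

lemma abs_a (n : ℕ) : |a n| = bb n := by
  rw [a, abs_mul, abs_pow, abs_neg, abs_one, one_pow, one_mul, abs_of_pos (bb_pos n)]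

lemma a_rec (n : ℕ) : a (n + 1) * (2 * n + 2) + a n * (2 * n + 1) = 0 := by
  have : ((2:ℝ) * n + 2) ≠ 0 := by positivity
  rw [a, a, bb_succ, pow_succ]
  field_simp
  ring

/-- the candidate derivative series -/
noncomputable def h (y : ℝ) : ℝ := ∑' n, a n * y ^ (2 * n)

/-- the arsinh series -/
noncomputable def g (y : ℝ) : ℝ := ∑' n, a n * y ^ (2 * n + 1) / (2 * n + 1 : ℝ)

lemma norm_le_aux {y r : ℝ} (hy : |y| ≤ r) (n k : ℕ) :
    ‖a n * y ^ k‖ ≤ r ^ k := by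
  rw [norm_mul, norm_pow]
  calc ‖a n‖ * ‖y‖ ^ k ≤ 1 * r ^ k := by
        apply mul_le_mul
        · rw [Real.norm_eq_abs, abs_a]; exact bb_le_one n
        · exact pow_le_pow_left₀ (abs_nonneg y) hy k
        · positivity
        · norm_num
    _ = r ^ k := one_mul _

lemma summable_geom_sq {r : ℝ} (h0 : 0 ≤ r) (h1 : r < 1) :
    Summable fun n : ℕ => r ^ (2 * n) := by
  have := summable_geometric_of_lt_one (mul_nonneg h0 h0) (by nlinarith : r * r < 1)
  refine this.congr fun n => ?_
  rw [pow_mul, sq]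

lemma summable_two_n {r : ℝ} (h0 : 0 ≤ r) (h1 : r < 1) :
    Summable fun n : ℕ => (2 * (n : ℝ) + 2) * r ^ n := by
  have hn : Summable fun n : ℕ => (n : ℝ) * r ^ n := by
    simpa using summable_pow_mul_geometric_of_norm_lt_one 1
      (by rwa [Real.norm_eq_abs, abs_of_nonneg h0])
  have hg : Summable fun n : ℕ => r ^ n := summable_geometric_of_lt_one h0 h1
  exact ((hn.mul_left 2).add (hg.mul_left 2)).congr fun n => by ring

lemma aux_bound {r : ℝ} (h0 : 0 ≤ r) (h1 : r ≤ 1) (n : ℕ) :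
    (2 * (n : ℝ)) * r ^ (2 * n - 1) ≤ (2 * (n : ℝ) + 2) * r ^ n := by
  cases n with
  | zero =>
    simp only [Nat.cast_zero, mul_zero, zero_mul]
    positivity
  | succ m =>
    have hp : r ^ (2 * (m + 1) - 1) ≤ r ^ (m + 1) :=
      pow_le_pow_of_le_one h0 h1 (by omega)
    have hc : (0:ℝ) ≤ 2 * ((m:ℝ) + 1) := by positivity
    have hrp : (0:ℝ) ≤ r ^ (m + 1) := by positivity
    push_cast
    nlinarith [pow_nonneg h0 (2 * (m + 1) - 1)]

lemma norm_deriv_term_le {y r : ℝ} (hy : |y| ≤ r) (h1 : r ≤ 1) (n : ℕ) :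
    ‖a n * (2 * (n : ℝ)) * y ^ (2 * n - 1)‖ ≤ (2 * (n : ℝ) + 2) * r ^ n := by
  have h0 : 0 ≤ r := le_trans (abs_nonneg y) hy
  calc ‖a n * (2 * (n : ℝ)) * y ^ (2 * n - 1)‖
      = |a n| * (2 * (n : ℝ)) * |y| ^ (2 * n - 1) := by
        rw [norm_mul, norm_mul, norm_pow, Real.norm_eq_abs, Real.norm_eq_abs,
          Real.norm_eq_abs, abs_of_nonneg (by positivity : (0:ℝ) ≤ 2 * (n:ℝ))]
    _ ≤ 1 * (2 * (n : ℝ)) * r ^ (2 * n - 1) := by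
        have ha : |a n| ≤ 1 := (abs_a n) ▸ bb_le_one n
        gcongr
    _ = (2 * (n : ℝ)) * r ^ (2 * n - 1) := by ring
    _ ≤ (2 * (n : ℝ) + 2) * r ^ n := aux_bound h0 h1 n

lemma summable_h_zero : Summable fun n : ℕ => a n * (0:ℝ) ^ (2 * n) := by
  apply summable_of_ne_finset_zero (s := {0})
  intro n hn
  simp only [Finset.mem_singleton] at hn
  rw [zero_pow (by omega : 2 * n ≠ 0), mul_zero]

lemma mem_ball_abs {z r : ℝ} : z ∈ Metric.ball (0:ℝ) r ↔ |z| < r := by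
  rw [Metric.mem_ball, Real.dist_eq, sub_zero]

lemma hasDerivAt_h_term (n : ℕ) (y : ℝ) :
    HasDerivAt (fun z : ℝ => a n * z ^ (2 * n)) (a n * (2 * (n:ℝ)) * y ^ (2 * n - 1)) y := by
  have := (hasDerivAt_pow (2 * n) y).const_mul (a n)
  refine this.congr_deriv ?_
  push_cast
  ring

lemma hasDerivAt_h {y : ℝ} (hy : |y| < 1) :
    HasDerivAt h (∑' n, a n * (2 * (n:ℝ)) * y ^ (2 * n - 1)) y := by
  set r : ℝ := (|y| + 1) / 2 with hr
  have h0 : 0 ≤ r := by positivity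
  have hyr : |y| < r := by rw [hr]; linarith
  have hr1 : r < 1 := by rw [hr]; linarith
  exact hasDerivAt_tsum_of_isPreconnected (summable_two_n h0 hr1) Metric.isOpen_ball
    (convex_ball (0:ℝ) r).isPreconnected
    (fun n z _ => hasDerivAt_h_term n z)
    (fun n z hz => norm_deriv_term_le (le_of_lt (mem_ball_abs.1 hz)) hr1.le n)
    (mem_ball_abs.2 (by rw [abs_zero, hr]; positivity))
    summable_h_zero (mem_ball_abs.2 hyr)

lemma summable_g_zero : Summable fun n : ℕ => a n * (0:ℝ) ^ (2 * n + 1) / (2 * n + 1 : ℝ) := by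
  refine summable_zero.congr fun n => ?_
  rw [zero_pow (by omega : 2 * n + 1 ≠ 0), mul_zero, zero_div]

lemma hasDerivAt_g_term (n : ℕ) (y : ℝ) :
    HasDerivAt (fun z : ℝ => a n * z ^ (2 * n + 1) / (2 * n + 1 : ℝ)) (a n * y ^ (2 * n)) y := by
  have hne : (2 * (n:ℝ) + 1) ≠ 0 := by positivity
  have hfun : (fun z : ℝ => a n * z ^ (2 * n + 1) / (2 * n + 1 : ℝ)) =
      fun z : ℝ => (a n / (2 * (n:ℝ) + 1)) * z ^ (2 * n + 1) := by
    funext z; push_cast; ring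
  rw [hfun]
  have H := (hasDerivAt_pow (2 * n + 1) y).const_mul (a n / (2 * (n:ℝ) + 1))
  refine H.congr_deriv ?_
  rw [show 2 * n + 1 - 1 = 2 * n by omega]
  push_cast
  field_simp

lemma hasDerivAt_g {y : ℝ} (hy : |y| < 1) : HasDerivAt g (h y) y := by
  set r : ℝ := (|y| + 1) / 2 with hr
  have h0 : 0 ≤ r := by positivity
  have hyr : |y| < r := by rw [hr]; linarith
  have hr1 : r < 1 := by rw [hr]; linarith
  exact hasDerivAt_tsum_of_isPreconnected (summable_geom_sq h0 hr1) Metric.isOpen_ball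
    (convex_ball (0:ℝ) r).isPreconnected
    (fun n z _ => hasDerivAt_g_term n z)
    (fun n z hz => norm_le_aux (le_of_lt (mem_ball_abs.1 hz)) n (2 * n))
    (mem_ball_abs.2 (by rw [abs_zero, hr]; positivity))
    summable_g_zero (mem_ball_abs.2 hyr)

lemma summable_s1 {y : ℝ} (hy : |y| < 1) :
    Summable fun n : ℕ => a n * (2 * (n:ℝ)) * y ^ (2 * n - 1) := by
  set r : ℝ := (|y| + 1) / 2 with hr
  have h0 : 0 ≤ r := by positivity
  have hyr : |y| ≤ r := by rw [hr]; linarith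
  have hr1 : r < 1 := by rw [hr]; linarith
  exact Summable.of_norm_bounded (summable_two_n h0 hr1)
    (fun n => norm_deriv_term_le hyr hr1.le n)

lemma summable_s2 {y : ℝ} (hy : |y| < 1) :
    Summable fun n : ℕ => a n * y ^ (2 * n) := by
  set r : ℝ := (|y| + 1) / 2 with hr
  have h0 : 0 ≤ r := by positivity
  have hyr : |y| ≤ r := by rw [hr]; linarith
  have hr1 : r < 1 := by rw [hr]; linarith
  exact Summable.of_norm_bounded (summable_geom_sq h0 hr1) (fun n => norm_le_aux hyr n _)

lemma ode {y : ℝ} (hy : |y| < 1) :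
    (1 + y ^ 2) * (∑' n, a n * (2 * (n:ℝ)) * y ^ (2 * n - 1)) + y * h y = 0 := by
  have s1 := summable_s1 hy
  have s2 := summable_s2 hy
  -- shifted version of s1
  have sA : Summable fun n : ℕ => a (n + 1) * (2 * (n:ℝ) + 2) * y ^ (2 * n + 1) := by
    refine ((summable_nat_add_iff 1).2 s1).congr fun n => ?_
    rw [show 2 * (n + 1) - 1 = 2 * n + 1 by omega]
    push_cast
    ring
  have sB : Summable fun n : ℕ => a n * (2 * (n:ℝ)) * y ^ (2 * n + 1) := by
    refine (s1.mul_left (y ^ 2)).congr fun n => ?_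
    cases n with
    | zero => norm_num
    | succ m =>
      rw [show 2 * (m + 1) - 1 = 2 * m + 1 by omega,
        show 2 * (m + 1) + 1 = (2 * m + 1) + 2 by omega, pow_add]
      ring
  have sC : Summable fun n : ℕ => a n * y ^ (2 * n + 1) := by
    refine (s2.mul_left y).congr fun n => ?_
    ring
  have key1 : (∑' n, a n * (2 * (n:ℝ)) * y ^ (2 * n - 1)) =
      ∑' n, a (n + 1) * (2 * (n:ℝ) + 2) * y ^ (2 * n + 1) := by
    rw [Summable.tsum_eq_zero_add s1]
    have h0 : a 0 * (2 * ((0:ℕ):ℝ)) * y ^ (2 * 0 - 1) = 0 := by norm_num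
    rw [h0, zero_add]
    exact tsum_congr fun n => by
      rw [show 2 * (n + 1) - 1 = 2 * n + 1 by omega]
      push_cast
      ring
  have key2 : y ^ 2 * (∑' n, a n * (2 * (n:ℝ)) * y ^ (2 * n - 1)) =
      ∑' n, a n * (2 * (n:ℝ)) * y ^ (2 * n + 1) := by
    rw [← tsum_mul_left]
    exact tsum_congr fun n => by
      cases n with
      | zero => norm_num
      | succ m =>
        rw [show 2 * (m + 1) - 1 = 2 * m + 1 by omega,
          show 2 * (m + 1) + 1 = (2 * m + 1) + 2 by omega, pow_add]
        ring
  have key3 : y * h y = ∑' n, a n * y ^ (2 * n + 1) := by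
    rw [h, ← tsum_mul_left]
    exact tsum_congr fun n => by ring
  have expand : (1 + y ^ 2) * (∑' n, a n * (2 * (n:ℝ)) * y ^ (2 * n - 1)) + y * h y =
      (∑' n, a (n + 1) * (2 * (n:ℝ) + 2) * y ^ (2 * n + 1)) +
        ((∑' n, a n * (2 * (n:ℝ)) * y ^ (2 * n + 1)) + ∑' n, a n * y ^ (2 * n + 1)) := by
    rw [← key1, ← key2, ← key3]; ring
  rw [expand, ← Summable.tsum_add sB sC, ← Summable.tsum_add sA (sB.add sC)]
  rw [show (0:ℝ) = ∑' _ : ℕ, (0:ℝ) by rw [tsum_zero]]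
  exact tsum_congr fun n => by
    have hr := a_rec n
    linear_combination y ^ (2 * n + 1) * hr

/-- a function with zero derivative on (-1,1) is constant there -/
lemma const_helper (f : ℝ → ℝ) (hf : ∀ x : ℝ, |x| < 1 → HasDerivAt f 0 x)
    {y : ℝ} (hy : |y| < 1) : f y = f 0 := by
  rcases le_or_gt 0 y with h0 | h0
  · have := constant_of_has_deriv_right_zero (f := f) (a := 0) (b := y)
      (fun x hx => (hf x (by rw [abs_lt] at *; constructor <;> [linarith [hx.1]; linarith [hx.2, hy.1, hy.2]])).continuousAt.continuousWithinAt)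
      (fun x hx => (hf x (by rw [abs_lt] at *; constructor <;> [linarith [hx.1]; linarith [hx.2, hy.1, hy.2]])).hasDerivWithinAt)
    exact this y (Set.right_mem_Icc.2 h0)
  · have := constant_of_has_deriv_right_zero (f := f) (a := y) (b := 0)
      (fun x hx => (hf x (by rw [abs_lt] at *; constructor <;> [linarith [hx.1, hy.1, hy.2]; linarith [hx.2]])).continuousAt.continuousWithinAt)
      (fun x hx => (hf x (by rw [abs_lt] at *; constructor <;> [linarith [hx.1, hy.1, hy.2]; linarith [hx.2]])).hasDerivWithinAt)
    exact (this 0 (Set.right_mem_Icc.2 h0.le)).symm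

lemma sqrt_one_add_sq_pos (y : ℝ) : 0 < Real.sqrt (1 + y ^ 2) :=
  Real.sqrt_pos.2 (by positivity)

lemma hasDerivAt_sqrt_one_add_sq (y : ℝ) :
    HasDerivAt (fun z : ℝ => Real.sqrt (1 + z ^ 2)) (y / Real.sqrt (1 + y ^ 2)) y := by
  have h1 : HasDerivAt (fun z : ℝ => 1 + z ^ 2) (2 * y) y := by
    simpa using (hasDerivAt_pow 2 y).const_add 1
  have h2 := (Real.hasDerivAt_sqrt (by positivity : (1:ℝ) + y ^ 2 ≠ 0)).comp y h1
  refine h2.congr_deriv ?_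
  have := (sqrt_one_add_sq_pos y).ne'
  field_simp

lemma h_eq {y : ℝ} (hy : |y| < 1) : h y = (Real.sqrt (1 + y ^ 2))⁻¹ := by
  set u : ℝ → ℝ := fun z => h z * Real.sqrt (1 + z ^ 2) with hu
  have hderiv : ∀ x : ℝ, |x| < 1 → HasDerivAt u 0 x := by
    intro x hx
    have H1 := (hasDerivAt_h hx).mul (hasDerivAt_sqrt_one_add_sq x)
    have hs := sqrt_one_add_sq_pos x
    have hsq : Real.sqrt (1 + x ^ 2) ^ 2 = 1 + x ^ 2 := Real.sq_sqrt (by positivity)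
    have hval : (∑' n, a n * (2 * (n:ℝ)) * x ^ (2 * n - 1)) * Real.sqrt (1 + x ^ 2) +
        h x * (x / Real.sqrt (1 + x ^ 2)) = 0 := by
      have hode := ode hx
      have hss : Real.sqrt (1 + x ^ 2) * Real.sqrt (1 + x ^ 2) = 1 + x ^ 2 :=
        Real.mul_self_sqrt (by positivity)
      have hinv : Real.sqrt (1 + x ^ 2) * (Real.sqrt (1 + x ^ 2))⁻¹ = 1 := mul_inv_cancel₀ hs.ne'
      linear_combination (Real.sqrt (1 + x ^ 2))⁻¹ * hode + (Real.sqrt (1 + x ^ 2))⁻¹ * (∑' n, a n * (2 * (n:ℝ)) * x ^ (2 * n - 1)) * hss - (∑' n, a n * (2 * (n:ℝ)) * x ^ (2 * n - 1)) * Real.sqrt (1 + x ^ 2) * hinv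
    rwa [hval] at H1
  have h0 : h 0 = 1 := by
    rw [h]
    rw [tsum_eq_single 0 (fun n hn => by
      rw [zero_pow (by omega : 2 * n ≠ 0), mul_zero])]
    simp [a, bb_zero]
  have hu0 : u 0 = 1 := by
    rw [hu]; simp [h0]
  have := const_helper u hderiv hy
  rw [hu0] at this
  have hs := sqrt_one_add_sq_pos y
  rw [hu] at this
  field_simp at this ⊢
  linarith [this]

lemma g_zero : g 0 = 0 := by
  rw [g]
  have : ∀ n : ℕ, a n * (0:ℝ) ^ (2 * n + 1) / (2 * n + 1 : ℝ) = 0 := fun n => by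
    rw [zero_pow (by omega : 2 * n + 1 ≠ 0), mul_zero, zero_div]
  rw [tsum_congr this, tsum_zero]

lemma interior_eq {y : ℝ} (hy : |y| < 1) : Real.arsinh y = g y := by
  set F : ℝ → ℝ := fun z => g z - Real.arsinh z with hF
  have hFd : ∀ x : ℝ, |x| < 1 → HasDerivAt F 0 x := by
    intro x hx
    have := (hasDerivAt_g hx).sub (Real.hasDerivAt_arsinh x)
    rwa [h_eq hx, sub_self] at this
  have := const_helper F hFd hy
  have h2 : g y - Real.arsinh y = g 0 - Real.arsinh 0 := this
  rw [g_zero, Real.arsinh_zero] at h2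
  linarith [h2]

lemma g_neg (y : ℝ) : g (-y) = -g y := by
  rw [g, g, ← tsum_neg]
  exact tsum_congr fun n => by
    rw [Odd.neg_pow (odd_two_mul_add_one n)]
    ring

lemma summable_u : Summable fun n : ℕ => 1 / (((n:ℝ) + 1) * Real.sqrt ((n:ℝ) + 1)) := by
  have h32 : Summable fun n : ℕ => 1 / (n:ℝ) ^ (3/2 : ℝ) :=
    Real.summable_one_div_nat_rpow.2 (by norm_num)
  refine ((summable_nat_add_iff 1).2 h32).congr fun n => ?_
  have hp : (0:ℝ) ≤ (n:ℝ) + 1 := by positivity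
  push_cast
  rw [show (3/2 : ℝ) = 1 + 1/2 by norm_num, Real.rpow_add (by positivity), Real.rpow_one,
    ← Real.sqrt_eq_rpow]

lemma g_bound (n : ℕ) (x : ℝ) (hx : x ∈ Set.Icc (-1:ℝ) 1) :
    ‖a n * x ^ (2 * n + 1) / (2 * n + 1 : ℝ)‖ ≤ 1 / (((n:ℝ) + 1) * Real.sqrt ((n:ℝ) + 1)) := by
  have hx1 : |x| ≤ 1 := abs_le.2 ⟨hx.1, hx.2⟩
  have h1 : (0:ℝ) < 2 * (n:ℝ) + 1 := by positivity
  have hs1 : (0:ℝ) < Real.sqrt (2 * (n:ℝ) + 1) := Real.sqrt_pos.2 h1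
  have step1 : ‖a n * x ^ (2 * n + 1) / (2 * n + 1 : ℝ)‖ ≤
      1 / (Real.sqrt (2 * (n:ℝ) + 1) * (2 * (n:ℝ) + 1)) := by
    rw [norm_div, norm_mul, norm_pow, Real.norm_eq_abs, Real.norm_eq_abs, Real.norm_eq_abs,
      abs_a, abs_of_pos h1]
    rw [div_le_div_iff₀ h1 (by positivity)]
    calc bb n * |x| ^ (2 * n + 1) * (Real.sqrt (2 * (n:ℝ) + 1) * (2 * (n:ℝ) + 1))
        ≤ (1 / Real.sqrt (2 * (n:ℝ) + 1)) * 1 * (Real.sqrt (2 * (n:ℝ) + 1) * (2 * (n:ℝ) + 1)) := by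
          gcongr
          · exact bb_le_sqrt n
          · exact pow_le_one₀ (abs_nonneg x) hx1
      _ = 1 * (2 * (n:ℝ) + 1) := by field_simp
      _ = 1 * (2 * (n:ℝ) + 1) := rfl
  refine step1.trans ?_
  have hn1 : (0:ℝ) < (n:ℝ) + 1 := by positivity
  apply one_div_le_one_div_of_le (by positivity)
  have hsq : Real.sqrt ((n:ℝ) + 1) ≤ Real.sqrt (2 * (n:ℝ) + 1) :=
    Real.sqrt_le_sqrt (by linarith [Nat.cast_nonneg (α := ℝ) n])
  calc ((n:ℝ) + 1) * Real.sqrt ((n:ℝ) + 1)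
      ≤ (2 * (n:ℝ) + 1) * Real.sqrt (2 * (n:ℝ) + 1) := by
        apply mul_le_mul (by linarith [Nat.cast_nonneg (α := ℝ) n]) hsq (Real.sqrt_nonneg _)
          (by positivity)
    _ = Real.sqrt (2 * (n:ℝ) + 1) * (2 * (n:ℝ) + 1) := by ring

lemma cont_g : ContinuousOn g (Set.Icc (-1:ℝ) 1) := by
  have H := tendstoUniformlyOn_tsum summable_u g_bound
  refine H.continuousOn (Filter.Frequently.of_forall fun t => ?_)
  exact (continuous_finset_sum t fun i _ =>
    (continuous_const.mul (continuous_pow _)).div_const _).continuousOn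

lemma endpoint_eq : Real.arsinh 1 = g 1 := by
  have hnb : (nhdsWithin (1:ℝ) (Set.Ioo (-1:ℝ) 1)).NeBot :=
    right_nhdsWithin_Ioo_neBot (by norm_num)
  have t1 : Filter.Tendsto g (nhdsWithin (1:ℝ) (Set.Ioo (-1:ℝ) 1)) (nhds (g 1)) :=
    (cont_g 1 (by norm_num)).mono Set.Ioo_subset_Icc_self
  have t2 : Filter.Tendsto Real.arsinh (nhdsWithin (1:ℝ) (Set.Ioo (-1:ℝ) 1))
      (nhds (Real.arsinh 1)) :=
    (Real.continuous_arsinh.continuousAt).continuousWithinAt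
  have heq : Real.arsinh =ᶠ[nhdsWithin (1:ℝ) (Set.Ioo (-1:ℝ) 1)] g :=
    eventually_nhdsWithin_of_forall fun z hz => interior_eq (abs_lt.2 ⟨hz.1, hz.2⟩)
  exact tendsto_nhds_unique (t2.congr' heq) t1

lemma main_eq {y : ℝ} (hy : |y| ≤ 1) : Real.arsinh y = g y := by
  rcases lt_or_eq_of_le hy with h | h
  · exact interior_eq h
  · rcases (abs_eq (by norm_num : (0:ℝ) ≤ 1)).1 h with h1 | h1
    · rw [h1]; exact endpoint_eq
    · rw [h1, show (-1:ℝ) = -(1:ℝ) by norm_num, Real.arsinh_neg, g_neg, endpoint_eq]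

end ArsinhSeries

open Real Nat in
theorem arsinh_series (y : ℝ) (hy : |y| ≤ 1) :
    arsinh y =
      ∑' n : ℕ,
        (-1 : ℝ) ^ n * (((2 * n - 1)‼ : ℝ) / ((2 * n)‼ : ℝ)) *
          y ^ (2 * n + 1) / (2 * n + 1 : ℝ) := by
  rw [ArsinhSeries.main_eq hy, ArsinhSeries.g]
  exact tsum_congr fun n => by rw [ArsinhSeries.a, ArsinhSeries.bb]
end

section
/- The Maclaurin series of arcsin converges to arcsin at the endpoints as well: for every real x with |x| ≤ 1 (including x = ±1), arcsin x = ∑_{n=0}^∞ ((2n−1)!!/(2n)!!) · x^{2n+1}/(2n+1). -/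
open Real Nat

noncomputable def asc (n : ℕ) : ℝ := ((2 * n - 1)‼ : ℝ) / ((2 * n)‼ : ℝ)

noncomputable def gterm (n : ℕ) (x : ℝ) : ℝ := asc n * x ^ (2 * n)
noncomputable def Fterm (n : ℕ) (x : ℝ) : ℝ := asc n * x ^ (2 * n + 1) / (2 * n + 1 : ℝ)
noncomputable def gd (n : ℕ) (x : ℝ) : ℝ := asc n * ((2 * n : ℕ) * x ^ (2 * n - 1))

lemma asc_pos (n : ℕ) : 0 < asc n := by
  apply _root_.div_pos <;> exact_mod_cast Nat.doubleFactorial_pos _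

lemma asc_zero : asc 0 = 1 := by norm_num [asc]

lemma asc_succ (n : ℕ) : (2 * (n : ℝ) + 2) * asc (n + 1) = (2 * n + 1) * asc n := by
  unfold asc
  have h1 : 2 * (n + 1) - 1 = 2 * n + 1 := by omega
  have h2 : (2 * n + 1)‼ = (2 * n + 1) * (2 * n - 1)‼ := Nat.doubleFactorial_add_one (2 * n)
  have h3 : (2 * (n + 1))‼ = (2 * n + 2) * (2 * n)‼ := by
    rw [show 2 * (n + 1) = 2 * n + 2 from by ring]; exact Nat.doubleFactorial_add_two (2 * n)
  have e1 : ((2 * n)‼ : ℝ) ≠ 0 := by exact_mod_cast (Nat.doubleFactorial_pos _).ne'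
  have e2 : ((2 * (n + 1))‼ : ℝ) ≠ 0 := by exact_mod_cast (Nat.doubleFactorial_pos _).ne'
  rw [h1, h2] ; rw [h3] at e2 ⊢
  push_cast at e2 ⊢
  field_simp

lemma asc_le_one (n : ℕ) : asc n ≤ 1 := by
  induction n with
  | zero => rw [asc_zero]
  | succ m ih =>
    have h := asc_succ m
    have hm : (0:ℝ) < 2 * m + 2 := by positivity
    have : asc (m + 1) = (2 * m + 1) * asc m / (2 * m + 2) := by
      field_simp at h ⊢; linarith [h]
    rw [this]
    rw [div_le_one hm]
    nlinarith [(asc_pos m).le]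

lemma hasDerivAt_gterm (n : ℕ) (x : ℝ) : HasDerivAt (fun y => gterm n y) (gd n x) x := by
  simpa [gterm, gd, mul_comm] using (hasDerivAt_pow (2 * n) x).const_mul (asc n)

lemma hasDerivAt_Fterm (n : ℕ) (x : ℝ) : HasDerivAt (fun y => Fterm n y) (gterm n x) x := by
  have h := ((hasDerivAt_pow (2 * n + 1) x).const_mul (asc n)).div_const (2 * n + 1 : ℝ)
  have hne : (2 * (n:ℝ) + 1) ≠ 0 := by positivity
  refine h.congr_deriv ?_
  simp only [gterm]
  push_cast
  field_simp

lemma gterm_bound {r y : ℝ} (hy : |y| ≤ r) (n : ℕ) : ‖gterm n y‖ ≤ (r ^ 2) ^ n := by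
  have h0 : (0:ℝ) ≤ r := le_trans (abs_nonneg y) hy
  have : ‖gterm n y‖ = asc n * |y| ^ (2 * n) := by
    simp [gterm, abs_mul, abs_of_pos (asc_pos n), abs_pow]
  rw [this, ← pow_mul]
  calc asc n * |y| ^ (2 * n) ≤ 1 * r ^ (2 * n) := by
        apply mul_le_mul (asc_le_one n) (pow_le_pow_left₀ (abs_nonneg y) hy _) (by positivity) one_pos.le
    _ = r ^ (2 * n) := one_mul _

lemma gd_bound {r y : ℝ} (hr : 0 < r) (hy : |y| ≤ r) (n : ℕ) :
    ‖gd n y‖ ≤ 2 / r * (n * (r ^ 2) ^ n) := by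
  rcases n with _ | m
  · simp [gd]
  · have habs : ‖gd (m + 1) y‖ = asc (m + 1) * ((2 * (m + 1)) * |y| ^ (2 * (m + 1) - 1)) := by
      simp only [gd, Real.norm_eq_abs, abs_mul, abs_pow, abs_of_pos (asc_pos (m + 1)),
        Nat.abs_cast]
      push_cast
      ring
    rw [habs]
    have he : 2 * (m + 1) - 1 = 2 * m + 1 := by omega
    rw [he]
    have h1 : |y| ^ (2 * m + 1) ≤ r ^ (2 * m + 1) :=
      pow_le_pow_left₀ (abs_nonneg y) hy _
    have h2 : asc (m + 1) * ((2 * (m + 1)) * |y| ^ (2 * m + 1)) ≤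
        1 * ((2 * (m + 1)) * r ^ (2 * m + 1)) := by
      apply mul_le_mul (asc_le_one _) _ (by positivity) one_pos.le
      apply mul_le_mul_of_nonneg_left h1 (by positivity)
    refine h2.trans ?_
    rw [one_mul]
    have : (2:ℝ) / r * ((m + 1) * (r ^ 2) ^ (m + 1)) = 2 * (m + 1) * r ^ (2 * m + 1) := by
      rw [← pow_mul]
      rw [show 2 * (m + 1) = (2 * m + 1) + 1 from by ring]
      field_simp
      ring
    push_cast
    rw [this]

lemma summable_geom_aux {r : ℝ} (hr : 0 < r) (hr1 : r < 1) :
    Summable (fun n : ℕ => (r ^ 2) ^ n) := by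
  apply summable_geometric_of_lt_one (by positivity)
  nlinarith

lemma summable_geom_mul_aux {r : ℝ} (hr : 0 < r) (hr1 : r < 1) :
    Summable (fun n : ℕ => 2 / r * ((n : ℝ) * (r ^ 2) ^ n)) := by
  apply Summable.mul_left
  have : ‖r ^ 2‖ < 1 := by rw [Real.norm_eq_abs, abs_of_pos (by positivity)]; nlinarith
  simpa using summable_pow_mul_geometric_of_norm_lt_one 1 this

lemma summable_gterm {y : ℝ} (hy : |y| < 1) : Summable (fun n => gterm n y) := by
  set r := (|y| + 1) / 2 with hr
  have h0 : 0 < r := by positivity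
  have h1 : r < 1 := by simp only [hr]; linarith
  have h2 : |y| ≤ r := by simp only [hr]; linarith
  exact (summable_geom_aux h0 h1).of_norm_bounded (gterm_bound h2)

lemma summable_gd {y : ℝ} (hy : |y| < 1) : Summable (fun n => gd n y) := by
  set r := (|y| + 1) / 2 with hr
  have h0 : 0 < r := by positivity
  have h1 : r < 1 := by simp only [hr]; linarith
  have h2 : |y| ≤ r := by simp only [hr]; linarith
  exact (summable_geom_mul_aux h0 h1).of_norm_bounded (gd_bound h0 h2)

lemma summable_Fterm {y : ℝ} (hy : |y| < 1) : Summable (fun n => Fterm n y) := by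
  apply (summable_gterm hy).of_norm_bounded
  intro n
  have h1 : (1:ℝ) ≤ 2 * n + 1 := by have := n.cast_nonneg (α:=ℝ); linarith
  have : ‖Fterm n y‖ = asc n * |y| ^ (2 * n + 1) / (2 * n + 1 : ℝ) := by
    simp [Fterm, abs_mul, abs_div, abs_of_pos (asc_pos n), abs_pow,
      abs_of_pos (show (0:ℝ) < 2 * n + 1 by positivity)]
  rw [this]
  have hby : |y| ^ (2 * n + 1) ≤ |y| ^ (2 * n) :=
    pow_le_pow_of_le_one (abs_nonneg y) hy.le (by omega)
  have hgt : gterm n y = asc n * |y| ^ (2 * n) := by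
    rw [gterm, (even_two_mul n).pow_abs]
  rw [hgt]
  calc asc n * |y| ^ (2 * n + 1) / (2 * n + 1 : ℝ) ≤ asc n * |y| ^ (2 * n + 1) :=
        div_le_self (mul_nonneg (asc_pos n).le (by positivity)) h1
    _ ≤ asc n * |y| ^ (2 * n) := mul_le_mul_of_nonneg_left hby (asc_pos n).le

noncomputable def G (x : ℝ) : ℝ := ∑' n, gterm n x
noncomputable def FF (x : ℝ) : ℝ := ∑' n, Fterm n x

lemma mem_Ioo_abs {r y : ℝ} : y ∈ Set.Ioo (-r) r ↔ |y| < r := by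
  rw [Set.mem_Ioo, abs_lt]

lemma hasDerivAt_G_s18 {r : ℝ} (h0 : 0 < r) (h1 : r < 1) {y : ℝ} (hy : |y| < r) :
    HasDerivAt G (∑' n, gd n y) y := by
  have h0' : (0:ℝ) ∈ Set.Ioo (-r) r := mem_Ioo_abs.2 (by rwa [abs_zero])
  exact hasDerivAt_tsum_of_isPreconnected (summable_geom_mul_aux h0 h1)
    (isOpen_Ioo : IsOpen (Set.Ioo (-r) r)) isPreconnected_Ioo
    (fun n z _ => hasDerivAt_gterm n z)
    (fun n z hz => gd_bound h0 (mem_Ioo_abs.1 hz).le n)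
    h0' (summable_gterm (by norm_num)) (mem_Ioo_abs.2 hy)

lemma hasDerivAt_FF {r : ℝ} (h0 : 0 < r) (h1 : r < 1) {y : ℝ} (hy : |y| < r) :
    HasDerivAt FF (G y) y := by
  have h0' : (0:ℝ) ∈ Set.Ioo (-r) r := mem_Ioo_abs.2 (by rwa [abs_zero])
  exact hasDerivAt_tsum_of_isPreconnected (summable_geom_aux h0 h1)
    (isOpen_Ioo : IsOpen (Set.Ioo (-r) r)) isPreconnected_Ioo
    (fun n z _ => hasDerivAt_Fterm n z)
    (fun n z hz => gterm_bound (mem_Ioo_abs.1 hz).le n)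
    h0' (summable_Fterm (by norm_num)) (mem_Ioo_abs.2 hy)

lemma gd_tsum_eq {y : ℝ} (hy : |y| < 1) : (1 - y ^ 2) * ∑' n, gd n y = y * G y := by
  have hgd := summable_gd hy
  have hgt := summable_gterm hy
  have hgd2 : Summable (fun n => gd (n + 1) y) := (summable_nat_add_iff 1).2 hgd
  have hgd3 : Summable (fun n => y ^ 2 * gd n y) := hgd.mul_left _
  have h1 : ∑' n, gd n y = ∑' n, gd (n + 1) y := by
    rw [hgd.tsum_eq_zero_add]; simp [gd]
  have hkey : ∀ n : ℕ, gd (n + 1) y - y ^ 2 * gd n y = y * gterm n y := by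
    intro n
    have hrec := asc_succ n
    have hA : gd (n + 1) y = 2 * (n : ℝ) * asc (n + 1) * y ^ (2 * n + 1)
        + 2 * asc (n + 1) * y ^ (2 * n + 1) := by
      simp only [gd]
      rw [show 2 * (n + 1) - 1 = 2 * n + 1 from by omega]
      push_cast; ring
    have hB : y ^ 2 * gd n y = 2 * (n : ℝ) * asc n * y ^ (2 * n + 1) := by
      rcases n with _ | m
      · simp [gd]
      · simp only [gd]
        rw [show 2 * (m + 1) - 1 = 2 * m + 1 from by omega,
          show 2 * (m + 1) + 1 = (2 * m + 1) + 2 from by omega]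
        push_cast; ring
    rw [hA, hB, gterm]
    have : (2 * (n:ℝ) * asc (n + 1) + 2 * asc (n + 1)) = 2 * (n:ℝ) * asc n + asc n := by
      nlinarith [hrec]
    linear_combination (y ^ (2 * n + 1)) * this
  calc (1 - y ^ 2) * ∑' n, gd n y = (∑' n, gd (n + 1) y) - ∑' n, y ^ 2 * gd n y := by
        rw [← h1, tsum_mul_left]; ring
    _ = ∑' n, (gd (n + 1) y - y ^ 2 * gd n y) := (hgd2.tsum_sub hgd3).symm
    _ = ∑' n, y * gterm n y := by exact tsum_congr hkey
    _ = y * G y := by rw [tsum_mul_left]; rfl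

lemma eq_at_zero_of_deriv_zero {f : ℝ → ℝ} {r : ℝ} (hf : ∀ y, |y| < r → HasDerivAt f 0 y)
    {x : ℝ} (hx : |x| < r) : f x = f 0 := by
  rcases le_total 0 x with h | h
  · have key := constant_of_has_deriv_right_zero (f := f) (a := 0) (b := x)
      (fun y hy => (hf y (by rw [abs_lt] at hx ⊢; constructor <;> [linarith [hy.1]; linarith [hy.2]])).continuousAt.continuousWithinAt)
      (fun y hy => (hf y (by rw [abs_lt] at hx ⊢; constructor <;> [linarith [hy.1]; linarith [hy.2]])).hasDerivWithinAt)
    exact key x ⟨h, le_rfl⟩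
  · have key := constant_of_has_deriv_right_zero (f := f) (a := x) (b := 0)
      (fun y hy => (hf y (by rw [abs_lt] at hx ⊢; constructor <;> [linarith [hy.1]; linarith [hy.2]])).continuousAt.continuousWithinAt)
      (fun y hy => (hf y (by rw [abs_lt] at hx ⊢; constructor <;> [linarith [hy.1]; linarith [hy.2]])).hasDerivWithinAt)
    exact (key 0 ⟨h, le_rfl⟩).symm

lemma gterm_nonneg (n : ℕ) (x : ℝ) : 0 ≤ gterm n x := by
  rw [gterm, pow_mul]
  exact mul_nonneg (asc_pos n).le (by positivity)

lemma G_zero : G 0 = 1 := by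
  rw [G]
  rw [tsum_eq_single 0 (fun n hn => by
    rw [gterm, zero_pow (by omega : 2 * n ≠ 0), mul_zero])]
  simp [gterm, asc_zero]

lemma G_sq {x : ℝ} (hx : |x| < 1) : (G x) ^ 2 * (1 - x ^ 2) = 1 := by
  set r := (|x| + 1) / 2 with hr
  have h0 : 0 < r := by positivity
  have h1 : r < 1 := by rw [hr]; linarith
  have h2 : |x| < r := by rw [hr]; linarith
  have hderiv : ∀ y, |y| < r → HasDerivAt (fun z => (G z) ^ 2 * (1 - z ^ 2)) 0 y := by
    intro y hy
    have hy1 : |y| < 1 := hy.trans h1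
    have hG := hasDerivAt_G_s18 h0 h1 hy
    have hq : HasDerivAt (fun z : ℝ => 1 - z ^ 2) (-(2 * y)) y := by
      simpa using (hasDerivAt_pow 2 y).const_sub 1
    have hrel := gd_tsum_eq hy1
    refine ((hG.pow 2).mul hq).congr_deriv ?_
    simp only [Pi.pow_apply]
    linear_combination (2 * G y) * hrel
  have hc := eq_at_zero_of_deriv_zero hderiv h2
  simpa [G_zero] using hc

lemma G_eq_s18 {x : ℝ} (hx : |x| < 1) : G x = 1 / Real.sqrt (1 - x ^ 2) := by
  have h1x : 0 < 1 - x ^ 2 := by nlinarith [sq_abs x, abs_nonneg x]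
  have hsq := G_sq hx
  have hG1 : 1 ≤ G x := by
    have hle := Summable.le_tsum (summable_gterm hx) 0 (fun i _ => gterm_nonneg i x)
    simpa [G, gterm, asc_zero] using hle
  have hs : 0 < Real.sqrt (1 - x ^ 2) := Real.sqrt_pos.2 h1x
  have hsq2 : (Real.sqrt (1 - x ^ 2) * G x) ^ 2 = 1 := by
    rw [mul_pow, Real.sq_sqrt h1x.le]; linarith [hsq]
  have hpos : 0 < Real.sqrt (1 - x ^ 2) * G x := mul_pos hs (lt_of_lt_of_le one_pos hG1)
  have hone : Real.sqrt (1 - x ^ 2) * G x = 1 := by nlinarith [hsq2, hpos]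
  rw [eq_div_iff hs.ne']
  linarith [hone]

lemma FF_zero : FF 0 = 0 := by
  have : ∀ n : ℕ, Fterm n 0 = 0 := by
    intro n
    rw [Fterm, zero_pow (by omega : 2 * n + 1 ≠ 0), mul_zero, zero_div]
  rw [FF]
  simp [this]

lemma main1 {x : ℝ} (hx : |x| < 1) : Real.arcsin x = FF x := by
  set r := (|x| + 1) / 2 with hr
  have h0 : 0 < r := by positivity
  have h1 : r < 1 := by rw [hr]; linarith
  have h2 : |x| < r := by rw [hr]; linarith
  have hderiv : ∀ y, |y| < r → HasDerivAt (fun z => FF z - Real.arcsin z) 0 y := by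
    intro y hy
    have hy1 : |y| < 1 := hy.trans h1
    rw [abs_lt] at hy1
    have hFF := hasDerivAt_FF h0 h1 hy
    have ha : HasDerivAt Real.arcsin (1 / Real.sqrt (1 - y ^ 2)) y :=
      Real.hasDerivAt_arcsin (by intro h; rw [h] at hy1; linarith [hy1.1])
        (by intro h; rw [h] at hy1; linarith [hy1.2])
    refine (hFF.sub ha).congr_deriv ?_
    rw [G_eq_s18 (by rw [abs_lt]; exact hy1)]
    ring
  have hc := eq_at_zero_of_deriv_zero hderiv h2
  rw [FF_zero, Real.arcsin_zero] at hc
  linarith [hc]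

lemma Fterm_nonneg {x : ℝ} (hx : 0 ≤ x) (n : ℕ) : 0 ≤ Fterm n x :=
  div_nonneg (mul_nonneg (asc_pos n).le (pow_nonneg hx _)) (by positivity)

lemma Fterm_mono {x : ℝ} (hx0 : 0 ≤ x) (hx1 : x ≤ 1) (n : ℕ) : Fterm n x ≤ Fterm n 1 := by
  rw [Fterm, Fterm, one_pow]
  gcongr
  · exact (asc_pos n).le
  · exact pow_le_one₀ hx0 hx1

lemma endpoint : Real.arcsin 1 = ∑' n, Fterm n 1 := by
  have hbn : ∀ n, 0 ≤ Fterm n 1 := Fterm_nonneg one_pos.le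
  have hmem : Set.Ioo (0:ℝ) 1 ∈ nhdsWithin (1:ℝ) (Set.Iio 1) :=
    Ioo_mem_nhdsLT_of_mem ⟨one_pos, le_refl 1⟩
  have habs : ∀ x ∈ Set.Ioo (0:ℝ) 1, |x| < 1 := by
    intro x hx; rw [abs_lt]; constructor <;> linarith [hx.1, hx.2]
  have hkey : ∀ N : ℕ, ∑ n ∈ Finset.range N, Fterm n 1 ≤ π / 2 := by
    intro N
    have hcont : Filter.Tendsto (fun x : ℝ => ∑ n ∈ Finset.range N, Fterm n x)
        (nhdsWithin 1 (Set.Iio 1)) (nhds (∑ n ∈ Finset.range N, Fterm n 1)) := by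
      refine Filter.Tendsto.mono_left ?_ nhdsWithin_le_nhds
      refine Continuous.tendsto ?_ 1
      apply continuous_finset_sum
      intro n _
      show Continuous fun x : ℝ => asc n * x ^ (2 * n + 1) / (2 * (n:ℝ) + 1)
      exact ((continuous_const.mul (continuous_pow _)).div_const _)
    refine le_of_tendsto hcont ?_
    filter_upwards [hmem] with x hx
    calc ∑ n ∈ Finset.range N, Fterm n x ≤ FF x :=
          Summable.sum_le_tsum (Finset.range N) (fun n _ => Fterm_nonneg hx.1.le n)
            (summable_Fterm (habs x hx))
      _ = Real.arcsin x := (main1 (habs x hx)).symm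
      _ ≤ π / 2 := Real.arcsin_le_pi_div_two x
  have hsum : Summable (fun n => Fterm n 1) := summable_of_sum_range_le hbn hkey
  have hle : ∑' n, Fterm n 1 ≤ π / 2 := Real.tsum_le_of_sum_range_le hbn hkey
  have hge : π / 2 ≤ ∑' n, Fterm n 1 := by
    have harc : Filter.Tendsto Real.arcsin (nhdsWithin 1 (Set.Iio 1)) (nhds (π / 2)) := by
      have h := Real.continuous_arcsin.tendsto 1
      rw [Real.arcsin_one] at h
      exact h.mono_left nhdsWithin_le_nhds
    refine le_of_tendsto harc ?_
    filter_upwards [hmem] with x hx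
    calc Real.arcsin x = FF x := main1 (habs x hx)
      _ ≤ ∑' n, Fterm n 1 :=
          Summable.tsum_le_tsum (fun n => Fterm_mono hx.1.le hx.2.le n)
            (summable_Fterm (habs x hx)) hsum
  rw [Real.arcsin_one]
  linarith

lemma Fterm_neg (n : ℕ) (x : ℝ) : Fterm n (-x) = -Fterm n x := by
  rw [Fterm, Fterm, Odd.neg_pow ⟨n, by ring⟩]
  ring

lemma main2 {x : ℝ} (hx0 : 0 ≤ x) (hx1 : x ≤ 1) : Real.arcsin x = FF x := by
  rcases eq_or_lt_of_le hx1 with h | h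
  · rw [h, FF, ← endpoint]
  · exact main1 (by rw [abs_of_nonneg hx0]; exact h)

lemma mainAll {x : ℝ} (hx : |x| ≤ 1) : Real.arcsin x = FF x := by
  rcases le_total 0 x with h | h
  · exact main2 h (le_of_abs_le hx)
  · have h2 : Real.arcsin (-x) = FF (-x) :=
      main2 (by linarith) (by rw [abs_le] at hx; linarith [hx.1])
    rw [FF] at h2
    rw [FF]
    calc Real.arcsin x = -Real.arcsin (-x) := by rw [Real.arcsin_neg, neg_neg]
      _ = -∑' n, Fterm n (-x) := by rw [h2]
      _ = ∑' n, -Fterm n (-x) := tsum_neg.symm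
      _ = ∑' n, Fterm n x := tsum_congr fun n => by rw [← Fterm_neg, neg_neg]

open Real Nat in
theorem arcsin_series_endpoints (x : ℝ) (hx : |x| ≤ 1) :
    arcsin x =
      ∑' n : ℕ,
        (((2 * n - 1)‼ : ℝ) / ((2 * n)‼ : ℝ)) * x ^ (2 * n + 1) / (2 * n + 1 : ℝ) := by
  rw [mainAll hx, FF]
  rfl
end
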